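/- arXiv:2509.05571 — 4 statements merged into one kernel-verified Lean document; each statement's English description precedes it below -/
import Mathlib

section
/- Let n ≥ 2, let d_1, …, d_n be unit vectors in ℂ^m, and let q = (q_1,…,q_n) be a probability vector. Then (P_s(q) − 1/n)² ≤ ((n−1)/n²) · [ (n−1) − 2 Σ_{i≠k} q_i q_k |⟨d_i, d_k⟩|² ]. -/
open Matrix ComplexOrder

noncomputable section

/-- Inner product ⟨a, b⟩ = ∑ i, conj (a i) * b i on a finite-dimensional complex space. -/
def ip {k : Type*} [Fintype k] (a b : k → ℂ) : ℂ := ∑ i, star (a i) * b i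

/-- The optimal success probability of minimum-error discrimination of the detector
states `d i` with prior probabilities `q i`: the supremum over all POVMs
`Pov` (positive semidefinite matrices summing to the identity) of
`∑ i, q i * ⟨d i, Pov i (d i)⟩`. -/
def Ps {m n : ℕ} (d : Fin n → Fin m → ℂ) (q : Fin n → ℝ) : ℝ :=
  sSup { x : ℝ | ∃ Pov : Fin n → Matrix (Fin m) (Fin m) ℂ,
    (∀ i, (Pov i).PosSemidef) ∧ (∑ i, Pov i) = 1 ∧
    x = ∑ i, q i * (ip (d i) ((Pov i) *ᵥ (d i))).re }

/-- The visibility `V(ρ̃_A) = √( (2(n−1)/n²) ∑_{i≠k} |⟨d_k, d_i⟩|² |(ρ_A)_{ik}|² )`. -/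
def Vis {m n : ℕ} (d : Fin n → Fin m → ℂ) (ρ : Matrix (Fin n) (Fin n) ℂ) : ℝ :=
  Real.sqrt ((2 * ((n : ℝ) - 1) / (n : ℝ) ^ 2) *
    ∑ i, ∑ k, if i = k then 0 else ‖ip (d k) (d i)‖ ^ 2 * ‖ρ i k‖ ^ 2)

/-- The post-interaction detector state `ρ̃_D = ∑ i, q i • d i (d i)^*`. -/
def detState {m n : ℕ} (d : Fin n → Fin m → ℂ) (q : Fin n → ℝ) :
    Matrix (Fin m) (Fin m) ℂ :=
  ∑ i, (q i : ℂ) • vecMulVec (d i) (star (d i))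

/-- The post-interaction particle state `(ρ̃_A)_{ik} = ⟨d_k, d_i⟩ (ρ_A)_{ik}`. -/
def post {m n : ℕ} (d : Fin n → Fin m → ℂ) (ρ : Matrix (Fin n) (Fin n) ℂ) :
    Matrix (Fin n) (Fin n) ℂ :=
  Matrix.of fun i k => ip (d k) (d i) * ρ i k

/-- The purity `Tr(ρ²)` (as a real number). -/
def purity {k : Type*} [Fintype k] (ρ : Matrix k k ℂ) : ℝ := ((ρ * ρ).trace).re

lemma cs_core {m : ℕ} (u w : Fin m → ℂ) :
    ‖∑ i, star (u i) * w i‖ ^ 2 ≤ (∑ i, star (u i) * u i).re * (∑ i, star (w i) * w i).re := by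
  have hn : ∀ v : Fin m → ℂ, (∑ i, star (v i) * v i).re = ∑ i, ‖v i‖ ^ 2 := by
    intro v
    rw [Complex.re_sum]
    refine Finset.sum_congr rfl fun i _ => ?_
    simp [Complex.star_def, Complex.mul_re, Complex.sq_norm,
      Complex.normSq_apply]
  rw [hn, hn]
  calc ‖∑ i, star (u i) * w i‖ ^ 2
      ≤ (∑ i, ‖u i‖ * ‖w i‖) ^ 2 := by
        apply pow_le_pow_left₀ (norm_nonneg _)
        calc ‖∑ i, star (u i) * w i‖ ≤ ∑ i, ‖star (u i) * w i‖ := norm_sum_le _ _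
          _ = ∑ i, ‖u i‖ * ‖w i‖ := by simp [norm_mul]
    _ ≤ (∑ i, ‖u i‖ ^ 2) * (∑ i, ‖w i‖ ^ 2) := Finset.sum_mul_sq_le_sq_mul_sq _ _ _

lemma cs_psd {m : ℕ} {M : Matrix (Fin m) (Fin m) ℂ} (hM : M.PosSemidef) (a b : Fin m → ℂ) :
    ‖ip a (M *ᵥ b)‖ ^ 2 ≤ (ip a (M *ᵥ a)).re * (ip b (M *ᵥ b)).re := by
  obtain ⟨B, rfl⟩ : ∃ B : Matrix (Fin m) (Fin m) ℂ, M = Bᴴ * B := by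
    open scoped MatrixOrder in exact CStarAlgebra.nonneg_iff_eq_star_mul_self.mp hM.nonneg
  have key : ∀ x y : Fin m → ℂ,
      ip x ((Bᴴ * B) *ᵥ y) = ∑ i, star ((B *ᵥ x) i) * ((B *ᵥ y) i) := by
    intro x y
    show star x ⬝ᵥ ((Bᴴ * B) *ᵥ y) = star (B *ᵥ x) ⬝ᵥ (B *ᵥ y)
    rw [← Matrix.mulVec_mulVec, Matrix.dotProduct_mulVec, ← Matrix.star_mulVec]
  rw [key, key, key]
  exact cs_core _ _

lemma ip_re_nonneg {m : ℕ} {M : Matrix (Fin m) (Fin m) ℂ} (hM : M.PosSemidef)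
    (a : Fin m → ℂ) : 0 ≤ (ip a (M *ᵥ a)).re := by
  have h := hM.dotProduct_mulVec_nonneg a
  rw [Complex.le_def] at h
  exact h.1

lemma scalar_pair (q1 q2 x y g : ℝ) (hq1 : 0 ≤ q1) (hq2 : 0 ≤ q2)
    (hx0 : 0 ≤ x) (hx1 : x ≤ 1) (hy0 : 0 ≤ y) (hy1 : y ≤ 1)
    (hg0 : 0 ≤ g) (hg1 : g ≤ 1)
    (hcs : Real.sqrt g ≤ Real.sqrt (x * y) + Real.sqrt ((1 - x) * (1 - y))) :
    q1 * x - q2 * y ≤ (q1 - q2 + Real.sqrt ((q1 + q2) ^ 2 - 4 * (q1 * q2 * g))) / 2 := by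
  set T := Real.sqrt ((q1 + q2) ^ 2 - 4 * (q1 * q2 * g)) with hT
  have hTnn : 0 ≤ T := Real.sqrt_nonneg _
  have harg : 0 ≤ (q1 + q2) ^ 2 - 4 * (q1 * q2 * g) := by
    nlinarith [mul_nonneg (mul_nonneg hq1 hq2) (sub_nonneg.mpr hg1), sq_nonneg (q1 - q2)]
  rcases le_or_gt (2 * (q1 * x - q2 * y) - (q1 - q2)) 0 with hA | hA
  · linarith
  · have hT2 : T ^ 2 = (q1 + q2) ^ 2 - 4 * (q1 * q2 * g) := Real.sq_sqrt harg
    set p := Real.sqrt (x * (1 - x)) with hp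
    set r := Real.sqrt (y * (1 - y)) with hr
    have hpnn : 0 ≤ p := Real.sqrt_nonneg _
    have hrnn : 0 ≤ r := Real.sqrt_nonneg _
    have hp2 : p ^ 2 = x * (1 - x) :=
      Real.sq_sqrt (mul_nonneg hx0 (sub_nonneg.mpr hx1))
    have hr2 : r ^ 2 = y * (1 - y) :=
      Real.sq_sqrt (mul_nonneg hy0 (sub_nonneg.mpr hy1))
    have hprod : Real.sqrt (x * y) * Real.sqrt ((1 - x) * (1 - y)) = p * r := by
      rw [hp, hr, ← Real.sqrt_mul (mul_nonneg hx0 hy0),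
        ← Real.sqrt_mul (mul_nonneg hx0 (sub_nonneg.mpr hx1))]
      congr 1
      ring
    have hxy2 : Real.sqrt (x * y) ^ 2 = x * y := Real.sq_sqrt (mul_nonneg hx0 hy0)
    have h1xy2 : Real.sqrt ((1 - x) * (1 - y)) ^ 2 = (1 - x) * (1 - y) :=
      Real.sq_sqrt (mul_nonneg (sub_nonneg.mpr hx1) (sub_nonneg.mpr hy1))
    have hB : g ≤ (Real.sqrt (x * y) + Real.sqrt ((1 - x) * (1 - y))) ^ 2 := by
      calc g = Real.sqrt g ^ 2 := (Real.sq_sqrt hg0).symm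
        _ ≤ _ := pow_le_pow_left₀ (Real.sqrt_nonneg _) hcs 2
    have hBe : g ≤ x * y + (1 - x) * (1 - y) + 2 * (p * r) := by
      nlinarith [hB, hxy2, h1xy2, hprod]
    have key : (2 * (q1 * x - q2 * y) - (q1 - q2)) ^ 2
        = T ^ 2 - 4 * (q1 * p - q2 * r) ^ 2
          - 4 * (q1 * q2) * (x * y + (1 - x) * (1 - y) + 2 * (p * r) - g) := by
      linear_combination -hT2 + 4 * q1 ^ 2 * hp2 + 4 * q2 ^ 2 * hr2
    have hA2 : (2 * (q1 * x - q2 * y) - (q1 - q2)) ^ 2 ≤ T ^ 2 := by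
      nlinarith [key, sq_nonneg (q1 * p - q2 * r),
        mul_nonneg (mul_nonneg hq1 hq2) (sub_nonneg.mpr hBe)]
    have hAT : 2 * (q1 * x - q2 * y) - (q1 - q2) ≤ T := by
      calc 2 * (q1 * x - q2 * y) - (q1 - q2)
          = Real.sqrt ((2 * (q1 * x - q2 * y) - (q1 - q2)) ^ 2) := (Real.sqrt_sq hA.le).symm
        _ ≤ Real.sqrt (T ^ 2) := Real.sqrt_le_sqrt hA2
        _ = T := Real.sqrt_sq hTnn
    linarith

lemma sum_offdiag {n : ℕ} (f : Fin n → ℝ) (i : Fin n) :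
    ∑ k, (if i = k then 0 else f k) = (∑ k, f k) - f i := by
  have h1 : ∑ k, (if i = k then f k else 0) = f i := by
    simp [Finset.sum_ite_eq]
  have h2 : ∀ k, (if i = k then (0:ℝ) else f k) = f k - (if i = k then f k else 0) := by
    intro k; by_cases h : i = k <;> simp [h]
  simp only [h2, Finset.sum_sub_distrib, h1]

lemma povm_bound {n m : ℕ} (d : Fin n → Fin m → ℂ)
    (hd : ∀ i, ip (d i) (d i) = 1)
    (q : Fin n → ℝ) (hq : ∀ i, 0 ≤ q i) (hq1 : ∑ i, q i = 1)
    (Pov : Fin n → Matrix (Fin m) (Fin m) ℂ)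
    (hP : ∀ i, (Pov i).PosSemidef) (hPsum : (∑ i, Pov i) = 1) :
    (n : ℝ) * (∑ i, q i * (ip (d i) ((Pov i) *ᵥ (d i))).re) - 1
      ≤ (∑ i, ∑ k, Real.sqrt ((q i + q k) ^ 2
          - 4 * (q i * q k * ‖ip (d i) (d k)‖ ^ 2))) / 2 := by
  set X : Fin n → Fin n → ℝ := fun i k => (ip (d k) ((Pov i) *ᵥ (d k))).re with hX
  set T : Fin n → Fin n → ℝ := fun i k =>
    Real.sqrt ((q i + q k) ^ 2 - 4 * (q i * q k * ‖ip (d i) (d k)‖ ^ 2)) with hT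
  have ht1 : ∀ i k, ‖ip (d i) (d k)‖ ^ 2 ≤ 1 := by
    intro i k
    have h := cs_core (d i) (d k)
    have h2 : ‖ip (d i) (d k)‖ ^ 2 ≤ (ip (d i) (d i)).re * (ip (d k) (d k)).re := h
    rw [hd i, hd k] at h2
    simpa using h2
  have hcompl : ∀ i, ((1 : Matrix (Fin m) (Fin m) ℂ) - Pov i).PosSemidef := by
    intro i
    have hsub : (1 : Matrix (Fin m) (Fin m) ℂ) - Pov i
        = ∑ j ∈ Finset.univ.erase i, Pov j := by
      have := Finset.sum_erase_add Finset.univ Pov (Finset.mem_univ i)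
      rw [hPsum] at this
      linear_combination (norm := module) -this
    rw [hsub]
    exact Finset.sum_induction Pov _ (fun a b ha hb => ha.add hb)
      Matrix.PosSemidef.zero (fun j _ => hP j)
  have hXnn : ∀ i k, 0 ≤ X i k := fun i k => ip_re_nonneg (hP i) _
  have hXcompl : ∀ i k, (ip (d k) (((1 : Matrix (Fin m) (Fin m) ℂ) - Pov i) *ᵥ (d k))).re
      = 1 - X i k := by
    intro i k
    rw [Matrix.sub_mulVec, Matrix.one_mulVec]
    have : ip (d k) (d k - (Pov i) *ᵥ (d k)) = ip (d k) (d k) - ip (d k) ((Pov i) *ᵥ (d k)) := by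
      simp [ip, mul_sub, Finset.sum_sub_distrib]
    rw [this, hd k]
    simp [hX]
  have hX1 : ∀ i k, X i k ≤ 1 := by
    intro i k
    have h := ip_re_nonneg (hcompl i) (d k)
    rw [hXcompl i k] at h
    linarith
  have hpair : ∀ i k, q i * X i i - q k * X i k ≤ (q i - q k) / 2 + T i k / 2 := by
    intro i k
    by_cases hik : i = k
    · subst hik
      simp only [sub_self, zero_div, zero_add]
      have : (0:ℝ) ≤ T i i / 2 := by positivity
      linarith
    · set z := ip (d i) ((Pov i) *ᵥ (d k)) with hz
      have hzb : ‖z‖ ≤ Real.sqrt (X i i * X i k) := by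
        have h2 : ‖z‖ ^ 2 ≤ X i i * X i k := cs_psd (hP i) (d i) (d k)
        calc ‖z‖ = Real.sqrt (‖z‖ ^ 2) := (Real.sqrt_sq (norm_nonneg _)).symm
          _ ≤ _ := Real.sqrt_le_sqrt h2
      have hwb : ‖ip (d i) (d k) - z‖ ≤ Real.sqrt ((1 - X i i) * (1 - X i k)) := by
        have hwz : ip (d i) (((1 : Matrix (Fin m) (Fin m) ℂ) - Pov i) *ᵥ (d k))
            = ip (d i) (d k) - z := by
          rw [Matrix.sub_mulVec, Matrix.one_mulVec]
          simp [ip, hz, mul_sub, Finset.sum_sub_distrib]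
        have h2 := cs_psd (hcompl i) (d i) (d k)
        rw [hwz, hXcompl i i, hXcompl i k] at h2
        calc ‖ip (d i) (d k) - z‖ = Real.sqrt (‖ip (d i) (d k) - z‖ ^ 2) :=
              (Real.sqrt_sq (norm_nonneg _)).symm
          _ ≤ _ := Real.sqrt_le_sqrt h2
      have hcs : Real.sqrt (‖ip (d i) (d k)‖ ^ 2)
          ≤ Real.sqrt (X i i * X i k) + Real.sqrt ((1 - X i i) * (1 - X i k)) := by
        rw [Real.sqrt_sq (norm_nonneg _)]
        calc ‖ip (d i) (d k)‖ = ‖z + (ip (d i) (d k) - z)‖ := by ring_nf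
          _ ≤ ‖z‖ + ‖ip (d i) (d k) - z‖ := norm_add_le _ _
          _ ≤ _ := add_le_add hzb hwb
      have key := scalar_pair (q i) (q k) (X i i) (X i k) (‖ip (d i) (d k)‖ ^ 2)
        (hq i) (hq k) (hXnn i i) (hX1 i i) (hXnn i k) (hX1 i k)
        (by positivity) (ht1 i k) hcs
      have : T i k = Real.sqrt ((q i + q k) ^ 2 - 4 * (q i * q k * ‖ip (d i) (d k)‖ ^ 2)) := rfl
      rw [this]
      linarith
  have hone : ∀ k, ∑ i, X i k = 1 := by
    intro k
    have hmv : (∑ i, Pov i) *ᵥ (d k) = ∑ i, (Pov i) *ᵥ (d k) := by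
      ext j
      simp [Matrix.mulVec, dotProduct, Finset.sum_apply, Matrix.sum_apply,
        Finset.sum_mul]
      rw [Finset.sum_comm]
    have h1 : ∑ i, ip (d k) ((Pov i) *ᵥ (d k)) = ip (d k) ((∑ i, Pov i) *ᵥ (d k)) := by
      rw [hmv]
      simp only [ip]
      rw [Finset.sum_comm]
      refine Finset.sum_congr rfl fun j _ => ?_
      simp [Finset.mul_sum, Finset.sum_apply]
    calc ∑ i, X i k = (∑ i, ip (d k) ((Pov i) *ᵥ (d k))).re := by rw [Complex.re_sum]
      _ = (ip (d k) ((∑ i, Pov i) *ᵥ (d k))).re := by rw [h1]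
      _ = 1 := by rw [hPsum, Matrix.one_mulVec, hd k]; rfl
  have hident : ∑ i, ∑ k, (q i * X i i - q k * X i k)
      = (n : ℝ) * (∑ i, q i * X i i) - 1 := by
    have h2 : ∑ i, ∑ k, (q k * X i k) = 1 := by
      rw [Finset.sum_comm]
      calc ∑ k, ∑ i, q k * X i k = ∑ k, q k * (∑ i, X i k) := by
            simp [Finset.mul_sum]
        _ = ∑ k, q k := by simp [hone]
        _ = 1 := hq1
    have h3 : ∑ i : Fin n, ∑ _k : Fin n, (q i * X i i) = (n : ℝ) * ∑ i, q i * X i i := by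
      rw [Finset.mul_sum]
      refine Finset.sum_congr rfl fun i _ => ?_
      rw [Finset.sum_const, Finset.card_univ, Fintype.card_fin, nsmul_eq_mul]
    simp only [Finset.sum_sub_distrib, h2, h3]
  have hb : ∑ i, ∑ k, (q i * X i i - q k * X i k)
      ≤ ∑ i, ∑ k, ((q i - q k) / 2 + T i k / 2) := by
    refine Finset.sum_le_sum fun i _ => Finset.sum_le_sum fun k _ => hpair i k
  have hqq : ∑ i, ∑ k, ((q i - q k) / 2 + T i k / 2)
      = (∑ i, ∑ k, T i k) / 2 := by
    have h0 : ∑ i, ∑ k, (q i - q k) = 0 := by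
      calc ∑ i, ∑ k, (q i - q k) = ∑ i : Fin n, ((n:ℝ) * q i - 1) := by
            refine Finset.sum_congr rfl fun i _ => ?_
            rw [Finset.sum_sub_distrib, Finset.sum_const, Finset.card_univ,
              Fintype.card_fin, nsmul_eq_mul, hq1]
        _ = 0 := by
            rw [Finset.sum_sub_distrib, ← Finset.mul_sum, hq1, Finset.sum_const,
              Finset.card_univ, Fintype.card_fin]
            simp
    have : ∀ i, ∑ k, ((q i - q k) / 2 + T i k / 2)
        = (∑ k, (q i - q k)) / 2 + (∑ k, T i k) / 2 := by
      intro i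
      rw [Finset.sum_add_distrib, Finset.sum_div, Finset.sum_div]
    rw [Finset.sum_congr rfl fun i _ => this i, Finset.sum_add_distrib,
      ← Finset.sum_div, ← Finset.sum_div, h0]
    simp
  rw [← hident]
  calc ∑ i, ∑ k, (q i * X i i - q k * X i k)
      ≤ ∑ i, ∑ k, ((q i - q k) / 2 + T i k / 2) := hb
    _ = (∑ i, ∑ k, T i k) / 2 := hqq

lemma ip_norm_sq_le_one {n m : ℕ} (d : Fin n → Fin m → ℂ)
    (hd : ∀ i, ip (d i) (d i) = 1) (i k : Fin n) : ‖ip (d i) (d k)‖ ^ 2 ≤ 1 := by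
  have h2 : ‖ip (d i) (d k)‖ ^ 2 ≤ (ip (d i) (d i)).re * (ip (d k) (d k)).re :=
    cs_core (d i) (d k)
  rw [hd i, hd k] at h2
  simpa using h2

lemma prod_sum_eq {n : ℕ} (f : Fin n → Fin n → ℝ) :
    ∑ p : Fin n × Fin n, f p.1 p.2 = ∑ i, ∑ k, f i k := by
  rw [← Finset.univ_product_univ, Finset.sum_product]

lemma pair_cs {n m : ℕ} (hn1 : 1 ≤ n) (d : Fin n → Fin m → ℂ)
    (hd : ∀ i, ip (d i) (d i) = 1)
    (q : Fin n → ℝ) (hq : ∀ i, 0 ≤ q i) (hq1 : ∑ i, q i = 1) :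
    (∑ i, ∑ k, Real.sqrt ((q i + q k) ^ 2 - 4 * (q i * q k * ‖ip (d i) (d k)‖ ^ 2))) ^ 2
      ≤ (2 * (n:ℝ) - 2) * ((2 * (n:ℝ) - 2)
          - 4 * ∑ i, ∑ k, if i = k then 0 else q i * q k * ‖ip (d i) (d k)‖ ^ 2) := by
  set T : Fin n → Fin n → ℝ := fun i k =>
    Real.sqrt ((q i + q k) ^ 2 - 4 * (q i * q k * ‖ip (d i) (d k)‖ ^ 2)) with hT
  have ht1 := ip_norm_sq_le_one d hd
  have htnn : ∀ i k, (0:ℝ) ≤ ‖ip (d i) (d k)‖ ^ 2 := fun i k => by positivity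
  have hTdiag : ∀ i, T i i = 0 := by
    intro i
    have h : (q i + q i) ^ 2 - 4 * (q i * q i * ‖ip (d i) (d i)‖ ^ 2) = 0 := by
      rw [hd i]
      simp
      ring
    simp only [hT, h, Real.sqrt_zero]
  have hpairsum : ∀ i k : Fin n, i ≠ k → q i + q k ≤ 1 := by
    intro i k hik
    have h1 : q i + q k = ∑ j ∈ ({i, k} : Finset (Fin n)), q j := (Finset.sum_pair hik).symm
    rw [h1, ← hq1]
    exact Finset.sum_le_sum_of_subset_of_nonneg (Finset.subset_univ _)
      (fun j _ _ => hq j)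
  set F : Fin n × Fin n → ℝ := fun p =>
    if p.1 = p.2 then 0 else Real.sqrt (q p.1 + q p.2) with hF
  set G : Fin n × Fin n → ℝ := fun p =>
    if p.1 = p.2 then 0 else
      (if q p.1 + q p.2 = 0 then 0 else T p.1 p.2 / Real.sqrt (q p.1 + q p.2)) with hG
  have hwnn : ∀ p : Fin n × Fin n, 0 ≤ q p.1 + q p.2 :=
    fun p => add_nonneg (hq p.1) (hq p.2)
  have hFG : ∀ p : Fin n × Fin n, T p.1 p.2 = F p * G p := by
    intro p
    by_cases h : p.1 = p.2
    · simp only [hF, hG, if_pos h, zero_mul]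
      rw [h, hTdiag]
    · by_cases hw : q p.1 + q p.2 = 0
      · have hq1' : q p.1 = 0 := le_antisymm (by linarith [hq p.1, hq p.2]) (hq p.1)
        have hq2' : q p.2 = 0 := le_antisymm (by linarith [hq p.1, hq p.2]) (hq p.2)
        simp only [hF, hG, if_neg h, if_pos hw, mul_zero, hT, hq1', hq2']
        norm_num
      · have hwpos : 0 < q p.1 + q p.2 := lt_of_le_of_ne (hwnn p) (Ne.symm hw)
        simp only [hF, hG, if_neg h, if_neg hw]
        rw [mul_comm, div_mul_cancel₀]
        exact Real.sqrt_ne_zero'.mpr hwpos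
  have hF2 : ∀ p : Fin n × Fin n, F p ^ 2 = if p.1 = p.2 then 0 else (q p.1 + q p.2) := by
    intro p
    by_cases h : p.1 = p.2
    · simp [hF, h]
    · simp only [hF, if_neg h]
      exact Real.sq_sqrt (hwnn p)
  have hG2 : ∀ p : Fin n × Fin n, G p ^ 2
      ≤ if p.1 = p.2 then 0 else
          ((q p.1 + q p.2) - 4 * (q p.1 * q p.2 * ‖ip (d p.1) (d p.2)‖ ^ 2)) := by
    intro p
    by_cases h : p.1 = p.2
    · simp [hG, h]
    · by_cases hw : q p.1 + q p.2 = 0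
      · have hq1' : q p.1 = 0 := le_antisymm (by linarith [hq p.1, hq p.2]) (hq p.1)
        have hq2' : q p.2 = 0 := le_antisymm (by linarith [hq p.1, hq p.2]) (hq p.2)
        simp [hG, h, hw, hq1', hq2']
      · have hwpos : 0 < q p.1 + q p.2 := lt_of_le_of_ne (hwnn p) (Ne.symm hw)
        have harg : 0 ≤ (q p.1 + q p.2) ^ 2 - 4 * (q p.1 * q p.2 * ‖ip (d p.1) (d p.2)‖ ^ 2) := by
          nlinarith [mul_nonneg (mul_nonneg (hq p.1) (hq p.2))
            (sub_nonneg.mpr (ht1 p.1 p.2)), sq_nonneg (q p.1 - q p.2)]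
        simp only [hG, if_neg h, if_neg hw, div_pow, hT, Real.sq_sqrt harg,
          Real.sq_sqrt (hwnn p)]
        rw [div_le_iff₀ hwpos]
        have hwle1 : q p.1 + q p.2 ≤ 1 := hpairsum p.1 p.2 h
        nlinarith [mul_nonneg (mul_nonneg (hq p.1) (hq p.2)) (htnn p.1 p.2)]
  have hSTeq : (∑ i, ∑ k, T i k) = ∑ p : Fin n × Fin n, F p * G p := by
    rw [← prod_sum_eq T]
    exact Finset.sum_congr rfl fun p _ => hFG p
  have hcs2 := Finset.sum_mul_sq_le_sq_mul_sq Finset.univ F G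
  have hFsum : ∑ p : Fin n × Fin n, F p ^ 2 = 2 * (n:ℝ) - 2 := by
    calc ∑ p : Fin n × Fin n, F p ^ 2
        = ∑ p : Fin n × Fin n, (if p.1 = p.2 then 0 else (q p.1 + q p.2)) :=
          Finset.sum_congr rfl fun p _ => hF2 p
      _ = ∑ i, ∑ k, (if i = k then 0 else (q i + q k)) :=
          prod_sum_eq (fun i k => if i = k then 0 else (q i + q k))
      _ = ∑ i : Fin n, ((∑ k, (q i + q k)) - (q i + q i)) := by
          refine Finset.sum_congr rfl fun i _ => sum_offdiag (fun k => q i + q k) i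
      _ = 2 * (n:ℝ) - 2 := by
          have : ∀ i : Fin n, (∑ k, (q i + q k)) - (q i + q i)
              = (n : ℝ) * q i + 1 - 2 * q i := by
            intro i
            rw [Finset.sum_add_distrib, Finset.sum_const, Finset.card_univ,
              Fintype.card_fin, nsmul_eq_mul, hq1]
            ring
          rw [Finset.sum_congr rfl fun i _ => this i, Finset.sum_sub_distrib,
            Finset.sum_add_distrib, ← Finset.mul_sum, ← Finset.mul_sum, hq1,
            Finset.sum_const, Finset.card_univ, Fintype.card_fin, nsmul_eq_mul]
          ring
  have hsplit : ∀ i k : Fin n, (if i = k then (0:ℝ) else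
        ((q i + q k) - 4 * (q i * q k * ‖ip (d i) (d k)‖ ^ 2)))
      = (if i = k then 0 else (q i + q k))
        - 4 * (if i = k then 0 else q i * q k * ‖ip (d i) (d k)‖ ^ 2) := by
    intro i k; by_cases h : i = k <;> simp [h]
  have hGsum : ∑ p : Fin n × Fin n, G p ^ 2
      ≤ (2 * (n:ℝ) - 2)
        - 4 * ∑ i, ∑ k, if i = k then 0 else q i * q k * ‖ip (d i) (d k)‖ ^ 2 := by
    calc ∑ p : Fin n × Fin n, G p ^ 2
        ≤ ∑ p : Fin n × Fin n, (if p.1 = p.2 then 0 else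
            ((q p.1 + q p.2) - 4 * (q p.1 * q p.2 * ‖ip (d p.1) (d p.2)‖ ^ 2))) :=
          Finset.sum_le_sum fun p _ => hG2 p
      _ = ∑ i, ∑ k, (if i = k then (0:ℝ) else
            ((q i + q k) - 4 * (q i * q k * ‖ip (d i) (d k)‖ ^ 2))) :=
          prod_sum_eq (fun i k => if i = k then (0:ℝ) else
            ((q i + q k) - 4 * (q i * q k * ‖ip (d i) (d k)‖ ^ 2)))
      _ = (∑ i, ∑ k, (if i = k then (0:ℝ) else (q i + q k)))
            - 4 * ∑ i, ∑ k, (if i = k then (0:ℝ) else q i * q k * ‖ip (d i) (d k)‖ ^ 2) := by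
          simp only [hsplit, Finset.sum_sub_distrib, ← Finset.mul_sum]
      _ ≤ _ := by
          have hw2 : ∑ i, ∑ k, (if i = k then (0:ℝ) else (q i + q k)) = 2 * (n:ℝ) - 2 := by
            rw [← prod_sum_eq (fun i k => if i = k then (0:ℝ) else (q i + q k)), ← hFsum]
            exact Finset.sum_congr rfl fun p _ => (hF2 p).symm
          rw [hw2]
  have hSTnn : 0 ≤ ∑ i, ∑ k, T i k :=
    Finset.sum_nonneg fun i _ => Finset.sum_nonneg fun k _ => Real.sqrt_nonneg _
  have h2n2 : (0:ℝ) ≤ 2 * (n:ℝ) - 2 := by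
    have : (1:ℝ) ≤ (n:ℝ) := by exact_mod_cast hn1
    linarith
  calc (∑ i, ∑ k, T i k) ^ 2 = (∑ p : Fin n × Fin n, F p * G p) ^ 2 := by rw [hSTeq]
    _ ≤ (∑ p : Fin n × Fin n, F p ^ 2) * (∑ p : Fin n × Fin n, G p ^ 2) := hcs2
    _ ≤ (2 * (n:ℝ) - 2) * ((2 * (n:ℝ) - 2)
          - 4 * ∑ i, ∑ k, if i = k then 0 else q i * q k * ‖ip (d i) (d k)‖ ^ 2) := by
        rw [hFsum]
        exact mul_le_mul_of_nonneg_left hGsum h2n2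

lemma witness_mem {m n : ℕ} (hn : 2 ≤ n) (d : Fin n → Fin m → ℂ)
    (hd : ∀ i, ip (d i) (d i) = 1)
    (q : Fin n → ℝ) (hq1 : ∑ i, q i = 1) :
    ∃ Pov : Fin n → Matrix (Fin m) (Fin m) ℂ,
      (∀ i, (Pov i).PosSemidef) ∧ (∑ i, Pov i) = 1 ∧
      (1 / (n:ℝ)) = ∑ i, q i * (ip (d i) ((Pov i) *ᵥ (d i))).re := by
  have hn0 : (n:ℕ) ≠ 0 := by omega
  have hn0' : ((n:ℝ)) ≠ 0 := Nat.cast_ne_zero.mpr hn0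
  refine ⟨fun _ => (((n:ℝ)⁻¹ : ℝ) : ℂ) • (1 : Matrix (Fin m) (Fin m) ℂ), ?_, ?_, ?_⟩
  · intro i
    refine Matrix.PosSemidef.of_dotProduct_mulVec_nonneg ?_ ?_
    · unfold Matrix.IsHermitian
      rw [Matrix.conjTranspose_smul, Matrix.conjTranspose_one]
      congr 1
      simp
    · intro x
      have h1 : ((((n:ℝ)⁻¹ : ℝ) : ℂ) • (1 : Matrix (Fin m) (Fin m) ℂ)) *ᵥ x
          = (((n:ℝ)⁻¹ : ℝ) : ℂ) • x := by
        rw [Matrix.smul_mulVec, Matrix.one_mulVec]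
      rw [h1]
      have h2 : star x ⬝ᵥ ((((n:ℝ)⁻¹ : ℝ) : ℂ) • x)
          = (((n:ℝ)⁻¹ : ℝ) : ℂ) * (star x ⬝ᵥ x) := by
        rw [dotProduct_smul]
        rfl
      rw [h2]
      apply mul_nonneg
      · rw [Complex.le_def]
        constructor
        · simp only [Complex.zero_re, Complex.ofReal_re]
          positivity
        · simp
      · exact Finset.sum_nonneg fun i _ => star_mul_self_nonneg (x i)
  · rw [Finset.sum_const, Finset.card_univ, Fintype.card_fin,
      ← Nat.cast_smul_eq_nsmul ℂ, smul_smul]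
    rw [show ((n:ℕ):ℂ) * (((n:ℝ)⁻¹ : ℝ) : ℂ) = 1 by
      push_cast
      field_simp]
    rw [one_smul]
  · have hval : ∀ i, ip (d i) (((((n:ℝ)⁻¹ : ℝ) : ℂ) • (1 : Matrix (Fin m) (Fin m) ℂ)) *ᵥ (d i))
        = (((n:ℝ)⁻¹ : ℝ) : ℂ) := by
      intro i
      rw [Matrix.smul_mulVec, Matrix.one_mulVec]
      have : ip (d i) ((((n:ℝ)⁻¹ : ℝ) : ℂ) • (d i)) = (((n:ℝ)⁻¹ : ℝ) : ℂ) * ip (d i) (d i) := by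
        simp only [ip, Pi.smul_apply, smul_eq_mul, Finset.mul_sum]
        refine Finset.sum_congr rfl fun j _ => by ring
      rw [this, hd i, mul_one]
    simp only [hval, Complex.ofReal_re]
    rw [← Finset.sum_mul, hq1]
    field_simp

/-- the path distinguishability bound
`(P_s(q) − 1/n)² ≤ ((n−1)/n²) ((n−1) − 2 ∑_{i≠k} q_i q_k |⟨d_i, d_k⟩|²)`. -/
theorem stmt7 (n m : ℕ) (hn : 2 ≤ n) (d : Fin n → Fin m → ℂ)
    (hd : ∀ i, ip (d i) (d i) = 1)
    (q : Fin n → ℝ) (hq : ∀ i, 0 ≤ q i) (hq1 : ∑ i, q i = 1) :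
    (Ps d q - 1 / n) ^ 2 ≤
      (((n : ℝ) - 1) / (n : ℝ) ^ 2) *
        (((n : ℝ) - 1) -
          2 * ∑ i, ∑ k, if i = k then 0 else q i * q k * ‖ip (d i) (d k)‖ ^ 2) := by
  have hn1 : 1 ≤ n := by omega
  have hn2 : (2:ℝ) ≤ (n:ℝ) := by exact_mod_cast hn
  have hnpos : (0:ℝ) < (n:ℝ) := by linarith
  set s : ℝ := ∑ i, ∑ k, if i = k then 0 else q i * q k * ‖ip (d i) (d k)‖ ^ 2 with hs
  set ST : ℝ := ∑ i, ∑ k,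
    Real.sqrt ((q i + q k) ^ 2 - 4 * (q i * q k * ‖ip (d i) (d k)‖ ^ 2)) with hST
  have hSTnn : 0 ≤ ST := by
    rw [hST]
    exact Finset.sum_nonneg fun i _ => Finset.sum_nonneg fun k _ => Real.sqrt_nonneg _
  set S : Set ℝ := { x : ℝ | ∃ Pov : Fin n → Matrix (Fin m) (Fin m) ℂ,
    (∀ i, (Pov i).PosSemidef) ∧ (∑ i, Pov i) = 1 ∧
    x = ∑ i, q i * (ip (d i) ((Pov i) *ᵥ (d i))).re } with hSdef
  have hPseq : Ps d q = sSup S := rfl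
  have hub : ∀ x ∈ S, x ≤ 1 / (n:ℝ) + ST / (2 * (n:ℝ)) := by
    rintro x ⟨Pov, hP, hPsum, rfl⟩
    have hb := povm_bound d hd q hq hq1 Pov hP hPsum
    rw [← hST] at hb
    have hx : (∑ i, q i * (ip (d i) ((Pov i) *ᵥ (d i))).re) ≤ (1 + ST / 2) / (n:ℝ) := by
      rw [le_div_iff₀ hnpos]
      linarith
    calc (∑ i, q i * (ip (d i) ((Pov i) *ᵥ (d i))).re) ≤ (1 + ST / 2) / (n:ℝ) := hx
      _ = 1 / (n:ℝ) + ST / (2 * (n:ℝ)) := by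
          field_simp
  have hwit : (1 / (n:ℝ)) ∈ S := witness_mem hn d hd q hq1
  have hne : S.Nonempty := ⟨1 / (n:ℝ), hwit⟩
  have hbdd : BddAbove S := ⟨1 / (n:ℝ) + ST / (2 * (n:ℝ)), fun x hx => hub x hx⟩
  have hPsub : Ps d q ≤ 1 / (n:ℝ) + ST / (2 * (n:ℝ)) := by
    rw [hPseq]
    exact csSup_le hne hub
  have hPslb : 1 / (n:ℝ) ≤ Ps d q := by
    rw [hPseq]
    exact le_csSup hbdd hwit
  have hcs := pair_cs hn1 d hd q hq hq1
  rw [← hST, ← hs] at hcs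
  have h0 : 0 ≤ Ps d q - 1 / (n:ℝ) := by linarith
  have h1 : Ps d q - 1 / (n:ℝ) ≤ ST / (2 * (n:ℝ)) := by linarith
  have h2 : (Ps d q - 1 / (n:ℝ)) ^ 2 ≤ (ST / (2 * (n:ℝ))) ^ 2 := pow_le_pow_left₀ h0 h1 2
  have h3 : (ST / (2 * (n:ℝ))) ^ 2 ≤ ((n:ℝ) - 1) / (n:ℝ) ^ 2 * (((n:ℝ) - 1) - 2 * s) := by
    rw [div_pow, div_le_iff₀ (by positivity)]
    calc ST ^ 2 ≤ (2 * (n:ℝ) - 2) * ((2 * (n:ℝ) - 2) - 4 * s) := hcs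
      _ = ((n:ℝ) - 1) / (n:ℝ) ^ 2 * (((n:ℝ) - 1) - 2 * s) * (2 * (n:ℝ)) ^ 2 := by
          field_simp
          ring
  linarith
end
end

section
/- Let n = 2, let d_1, d_2 be unit vectors in ℂ^m, and let ψ be a unit vector in ℂ² (a pure input state of the particle, without quantum memory). Set ρ_A = ψψ^* and q_i = |ψ_i|². Then equality holds in the wave-particle duality: (P_s(q) − 1/2)² + V(ρ̃_A)² = 1/4. -/
open Matrix ComplexOrder

noncomputable section

section Aux

lemma ip_dot {k : Type*} [Fintype k] (a b : k → ℂ) : ip a b = star a ⬝ᵥ b := rfl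

lemma ip_smul_right {k : Type*} [Fintype k] (x y : k → ℂ) (s : ℂ) :
    ip x (s • y) = s * ip x y := by
  simp [ip, Finset.mul_sum]; ring_nf
  exact Finset.sum_congr rfl fun i _ => by ring

lemma ip_smul_left {k : Type*} [Fintype k] (x y : k → ℂ) (s : ℂ) :
    ip (s • x) y = starRingEnd ℂ s * ip x y := by
  simp [ip, Finset.mul_sum]
  exact Finset.sum_congr rfl fun i _ => by ring

lemma ip_sub_right {k : Type*} [Fintype k] (x u v : k → ℂ) :
    ip x (u - v) = ip x u - ip x v := by
  simp [ip, mul_sub, Finset.sum_sub_distrib]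

lemma ip_sub_left {k : Type*} [Fintype k] (x u v : k → ℂ) :
    ip (u - v) x = ip u x - ip v x := by
  simp [ip, sub_mul, Finset.sum_sub_distrib]

lemma ip_add_right {k : Type*} [Fintype k] (x u v : k → ℂ) :
    ip x (u + v) = ip x u + ip x v := by
  simp [ip, mul_add, Finset.sum_add_distrib]

lemma ip_add_left {k : Type*} [Fintype k] (x u v : k → ℂ) :
    ip (u + v) x = ip u x + ip v x := by
  simp [ip, add_mul, Finset.sum_add_distrib]

lemma vecMulVec_mulVec {k : Type*} [Fintype k] (v w x : k → ℂ) :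
    (vecMulVec v w) *ᵥ x = (w ⬝ᵥ x) • v := by
  ext i
  simp [Matrix.mulVec, vecMulVec_apply, dotProduct, Finset.mul_sum, Finset.sum_mul]
  exact Finset.sum_congr rfl fun j _ => by ring

lemma ip_vvstar {k : Type*} [Fintype k] (v x y : k → ℂ) :
    ip x ((vecMulVec v (star v)) *ᵥ y) = ip v y * ip x v := by
  rw [_root_.vecMulVec_mulVec, ip_smul_right]
  rfl

lemma ip_conj' {k : Type*} [Fintype k] (a b : k → ℂ) : ip b a = starRingEnd ℂ (ip a b) := by
  simp [ip, map_sum, mul_comm]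

lemma ip_eq_inner' {k : Type*} [Fintype k] (a b : k → ℂ) :
    ip a b = @inner ℂ (EuclideanSpace ℂ k) _ (WithLp.toLp 2 a) (WithLp.toLp 2 b) := by
  simp [ip, PiLp.inner_apply, RCLike.inner_apply, mul_comm]

lemma ip_cs' {k : Type*} [Fintype k] (a b : k → ℂ) :
    ‖ip a b‖ ^ 2 ≤ (ip a a).re * (ip b b).re := by
  have ha := @inner_self_eq_norm_sq ℂ (EuclideanSpace ℂ k) _ _ _ (WithLp.toLp 2 a)
  have hb := @inner_self_eq_norm_sq ℂ (EuclideanSpace ℂ k) _ _ _ (WithLp.toLp 2 b)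
  simp only [RCLike.re_to_complex] at ha hb
  rw [ip_eq_inner', ip_eq_inner', ip_eq_inner', ha, hb]
  have h := @norm_inner_le_norm ℂ (EuclideanSpace ℂ k) _ _ _ (WithLp.toLp 2 a) (WithLp.toLp 2 b)
  have h2 : (0:ℝ) ≤ ‖@inner ℂ (EuclideanSpace ℂ k) _ (WithLp.toLp 2 a) (WithLp.toLp 2 b)‖ := norm_nonneg _
  nlinarith [norm_nonneg (WithLp.toLp 2 a : EuclideanSpace ℂ k), norm_nonneg (WithLp.toLp 2 b : EuclideanSpace ℂ k)]

lemma ip_self_im {k : Type*} [Fintype k] (a : k → ℂ) : (ip a a).im = 0 := by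
  rw [ip, Complex.im_sum]
  apply Finset.sum_eq_zero
  intro i _
  simp [Complex.mul_im]
  ring

lemma vvstar_psd {mm : ℕ} (v : Fin mm → ℂ) : (vecMulVec v (star v)).PosSemidef := by
  refine Matrix.PosSemidef.of_dotProduct_mulVec_nonneg ?_ ?_
  · ext i j
    simp [Matrix.conjTranspose_apply, vecMulVec_apply, mul_comm]
  · intro x
    have : star x ⬝ᵥ (vecMulVec v (star v)) *ᵥ x = star (ip v x) * (ip v x) := by
      rw [← ip_dot, ip_vvstar]
      rw [ip_conj' x v, Complex.star_def, Complex.conj_conj]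
      ring
    rw [this]
    exact star_mul_self_nonneg _

lemma one_sub_vvstar_psd {mm : ℕ} (v : Fin mm → ℂ) (hv : ip v v = 1) :
    ((1 : Matrix (Fin mm) (Fin mm) ℂ) - vecMulVec v (star v)).PosSemidef := by
  refine Matrix.PosSemidef.of_dotProduct_mulVec_nonneg ?_ ?_
  · ext i j
    simp [Matrix.conjTranspose_apply, vecMulVec_apply, Matrix.one_apply, mul_comm,
      apply_ite (starRingEnd ℂ), eq_comm]
  · intro x
    have e : star x ⬝ᵥ ((1 : Matrix (Fin mm) (Fin mm) ℂ) - vecMulVec v (star v)) *ᵥ x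
        = ip x x - star (ip v x) * (ip v x) := by
      rw [Matrix.sub_mulVec, Matrix.one_mulVec, dotProduct_sub, ← ip_dot, ← ip_dot, ip_vvstar,
        ip_conj' x v, Complex.star_def, Complex.conj_conj]
      ring
    rw [e, Complex.le_def]
    constructor
    · have h1 : (star (ip v x) * ip v x) = (‖ip v x‖^2 : ℝ) := by
        rw [Complex.star_def, ← Complex.normSq_eq_conj_mul_self, Complex.normSq_eq_norm_sq]
      have h2 := ip_cs' v x
      rw [hv] at h2
      simp only [Complex.sub_re, h1, Complex.ofReal_re, Complex.zero_re]
      simp at h2 ⊢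
      linarith
    · have h1 : (star (ip v x) * ip v x).im = 0 := by
        rw [Complex.star_def, ← Complex.normSq_eq_conj_mul_self]
        simp
      simp only [Complex.sub_im, h1, ip_self_im, Complex.zero_im]
      ring

lemma ip_eq_inner {k : Type*} [Fintype k] (a b : k → ℂ) :
    ip a b = @inner ℂ (EuclideanSpace ℂ k) _ (WithLp.toLp 2 a) (WithLp.toLp 2 b) := by
  simp [ip, PiLp.inner_apply, RCLike.inner_apply, mul_comm]

lemma ip_cs {k : Type*} [Fintype k] (a b : k → ℂ) :
    ‖ip a b‖ ^ 2 ≤ (ip a a).re * (ip b b).re := by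
  have ha := @inner_self_eq_norm_sq ℂ (EuclideanSpace ℂ k) _ _ _ (WithLp.toLp 2 a)
  have hb := @inner_self_eq_norm_sq ℂ (EuclideanSpace ℂ k) _ _ _ (WithLp.toLp 2 b)
  simp only [RCLike.re_to_complex] at ha hb
  rw [ip_eq_inner, ip_eq_inner, ip_eq_inner, ha, hb]
  have h := @norm_inner_le_norm ℂ (EuclideanSpace ℂ k) _ _ _ (WithLp.toLp 2 a) (WithLp.toLp 2 b)
  have h2 : (0:ℝ) ≤ ‖@inner ℂ (EuclideanSpace ℂ k) _ (WithLp.toLp 2 a) (WithLp.toLp 2 b)‖ := norm_nonneg _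
  nlinarith [norm_nonneg (WithLp.toLp 2 a : EuclideanSpace ℂ k), norm_nonneg (WithLp.toLp 2 b : EuclideanSpace ℂ k)]

lemma psd_nonneg {mm : ℕ} {M : Matrix (Fin mm) (Fin mm) ℂ} (hM : M.PosSemidef)
    (x : Fin mm → ℂ) : 0 ≤ (ip x (M *ᵥ x)).re := by
  have h := hM.dotProduct_mulVec_nonneg x
  rw [Complex.le_def] at h
  simpa [ip_dot] using h.1

open scoped MatrixOrder in
lemma psd_cs {mm : ℕ} {M : Matrix (Fin mm) (Fin mm) ℂ} (hM : M.PosSemidef)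
    (x y : Fin mm → ℂ) :
    ‖ip x (M *ᵥ y)‖ ^ 2 ≤ (ip x (M *ᵥ x)).re * (ip y (M *ᵥ y)).re := by
  obtain ⟨B, rfl⟩ := CStarAlgebra.nonneg_iff_eq_star_mul_self.mp hM.nonneg
  simp only [Matrix.star_eq_conjTranspose]
  have e : ∀ u v : Fin mm → ℂ, ip u ((Bᴴ * B) *ᵥ v) = ip (B *ᵥ u) (B *ᵥ v) := by
    intro u v
    rw [ip_dot, ip_dot, ← Matrix.mulVec_mulVec, Matrix.dotProduct_mulVec, ← Matrix.star_mulVec]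
  rw [e, e, e]
  exact ip_cs _ _

lemma key_ineq (q0 q1 a b g : ℝ) (hq0 : 0 ≤ q0) (hq1 : 0 ≤ q1) (hs : q0 + q1 = 1)
    (ha0 : 0 ≤ a) (ha1 : a ≤ 1) (hb0 : 0 ≤ b) (hb1 : b ≤ 1) (hg0 : 0 ≤ g)
    (hF : g ≤ Real.sqrt (a*b) + Real.sqrt ((1-a)*(1-b))) :
    q1 + (q0*a - q1*b) ≤ (1 + Real.sqrt (1 - 4*q0*q1*g^2))/2 := by
  have ha1' : (0:ℝ) ≤ 1 - a := by linarith
  have hb1' : (0:ℝ) ≤ 1 - b := by linarith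
  set sa := Real.sqrt a with hsa
  set sb := Real.sqrt b with hsb
  set sc := Real.sqrt (1-a) with hsc
  set sd := Real.sqrt (1-b) with hsd
  have h1 : sa^2 = a := Real.sq_sqrt ha0
  have h2 : sb^2 = b := Real.sq_sqrt hb0
  have h3 : sc^2 = 1-a := Real.sq_sqrt ha1'
  have h4 : sd^2 = 1-b := Real.sq_sqrt hb1'
  have hsa0 : 0 ≤ sa := Real.sqrt_nonneg _
  have hsb0 : 0 ≤ sb := Real.sqrt_nonneg _
  have hsc0 : 0 ≤ sc := Real.sqrt_nonneg _
  have hsd0 : 0 ≤ sd := Real.sqrt_nonneg _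
  have hab : Real.sqrt (a*b) = sa*sb := Real.sqrt_mul ha0 b
  have hab' : Real.sqrt ((1-a)*(1-b)) = sc*sd := Real.sqrt_mul ha1' (1-b)
  rw [hab, hab'] at hF
  have hg2 : g^2 ≤ (sa*sb + sc*sd)^2 := by nlinarith
  have e1 : 2*(q1 + (q0*a - q1*b)) - 1 = q0*(sa^2-sc^2) + q1*(sd^2-sb^2) := by
    linear_combination q0*h3 - q0*h1 + q1*h2 - q1*h4 + hs
  have e2 : q0*(sa^2+sc^2) + q1*(sb^2+sd^2) = 1 := by
    linear_combination q0*h1 + q0*h3 + q1*h2 + q1*h4 + hs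
  have key : (q0*(sa^2-sc^2) + q1*(sd^2-sb^2))^2 + 4*q0*q1*(sa*sb+sc*sd)^2
      + 4*(q0*sa*sc - q1*sb*sd)^2 = 1 := by
    linear_combination (q0*(sa^2+sc^2) + q1*(sb^2+sd^2) + 1) * e2
  have h5 : 4*q0*q1*g^2 ≤ 4*q0*q1*(sa*sb+sc*sd)^2 :=
    mul_le_mul_of_nonneg_left hg2 (by positivity)
  have hL : (2*(q1 + (q0*a - q1*b)) - 1)^2 ≤ 1 - 4*q0*q1*g^2 := by
    rw [e1]
    nlinarith [sq_nonneg (q0*sa*sc - q1*sb*sd)]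
  have := Real.le_sqrt_of_sq_le hL
  linarith

lemma Ps_ub {m : ℕ} (d : Fin 2 → Fin m → ℂ) (hd : ∀ i, ip (d i) (d i) = 1)
    (q : Fin 2 → ℝ) (hq0 : 0 ≤ q 0) (hq1 : 0 ≤ q 1) (hqs : q 0 + q 1 = 1)
    (Pov : Fin 2 → Matrix (Fin m) (Fin m) ℂ) (hpsd : ∀ i, (Pov i).PosSemidef)
    (hsum : (∑ i, Pov i) = 1) :
    q 0 * (ip (d 0) ((Pov 0) *ᵥ (d 0))).re + q 1 * (ip (d 1) ((Pov 1) *ᵥ (d 1))).re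
      ≤ (1 + Real.sqrt (1 - 4 * (q 0) * (q 1) * ‖ip (d 0) (d 1)‖^2))/2 := by
  have hsum' : Pov 0 + Pov 1 = 1 := by simpa [Fin.sum_univ_two] using hsum
  have h10 : Pov 1 = 1 - Pov 0 := by
    rw [← hsum']; abel
  have hmv : ∀ y, Pov 1 *ᵥ y = y - Pov 0 *ᵥ y := by
    intro y; rw [h10, Matrix.sub_mulVec, Matrix.one_mulVec]
  set a := (ip (d 0) ((Pov 0) *ᵥ (d 0))).re with ha_def
  set b := (ip (d 1) ((Pov 0) *ᵥ (d 1))).re with hb_def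
  have hb' : (ip (d 1) ((Pov 1) *ᵥ (d 1))).re = 1 - b := by
    rw [hmv, ip_sub_right, hd 1]; simp [hb_def]
  have ha' : (ip (d 0) ((Pov 1) *ᵥ (d 0))).re = 1 - a := by
    rw [hmv, ip_sub_right, hd 0]; simp [ha_def]
  have ha0 : 0 ≤ a := psd_nonneg (hpsd 0) _
  have hb0 : 0 ≤ b := psd_nonneg (hpsd 0) _
  have ha1 : a ≤ 1 := by have := psd_nonneg (hpsd 1) (d 0); rw [ha'] at this; linarith
  have hb1 : b ≤ 1 := by have := psd_nonneg (hpsd 1) (d 1); rw [hb'] at this; linarith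
  -- the off-diagonal bounds
  have hz0 : ‖ip (d 0) ((Pov 0) *ᵥ (d 1))‖ ≤ Real.sqrt (a * b) := by
    have h := psd_cs (hpsd 0) (d 0) (d 1)
    have := Real.sqrt_le_sqrt h
    rwa [Real.sqrt_sq (norm_nonneg _)] at this
  have hz1 : ‖ip (d 0) ((Pov 1) *ᵥ (d 1))‖ ≤ Real.sqrt ((1-a) * (1-b)) := by
    have h := psd_cs (hpsd 1) (d 0) (d 1)
    rw [ha', hb'] at h
    have := Real.sqrt_le_sqrt h
    rwa [Real.sqrt_sq (norm_nonneg _)] at this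
  have hsplit : ip (d 0) (d 1) = ip (d 0) ((Pov 0) *ᵥ (d 1)) + ip (d 0) ((Pov 1) *ᵥ (d 1)) := by
    rw [hmv, ip_sub_right]; ring
  have hF : ‖ip (d 0) (d 1)‖ ≤ Real.sqrt (a*b) + Real.sqrt ((1-a)*(1-b)) := by
    calc ‖ip (d 0) (d 1)‖ ≤ ‖ip (d 0) ((Pov 0) *ᵥ (d 1))‖ + ‖ip (d 0) ((Pov 1) *ᵥ (d 1))‖ := by
          rw [hsplit]; exact norm_add_le _ _
      _ ≤ _ := add_le_add hz0 hz1
  have := key_ineq (q 0) (q 1) a b (‖ip (d 0) (d 1)‖) hq0 hq1 hqs ha0 ha1 hb0 hb1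
    (norm_nonneg _) hF
  rw [hb']
  linarith

lemma Ps_mem {m : ℕ} (d : Fin 2 → Fin m → ℂ) (hd : ∀ i, ip (d i) (d i) = 1)
    (q : Fin 2 → ℝ) (hq0 : 0 ≤ q 0) (hq1 : 0 ≤ q 1) (hqs : q 0 + q 1 = 1) :
    ∃ Pov : Fin 2 → Matrix (Fin m) (Fin m) ℂ,
      (∀ i, (Pov i).PosSemidef) ∧ (∑ i, Pov i) = 1 ∧
      (1 + Real.sqrt (1 - 4 * q 0 * q 1 * ‖ip (d 0) (d 1)‖^2))/2
        = ∑ i, q i * (ip (d i) ((Pov i) *ᵥ (d i))).re := by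
  set c := ip (d 0) (d 1) with hc
  set g := ‖c‖ with hg
  have hg0 : 0 ≤ g := norm_nonneg _
  have hg2le : g^2 ≤ 1 := by
    have h := ip_cs' (d 0) (d 1)
    rw [hd 0, hd 1] at h
    simp only [Complex.one_re, one_mul] at h
    rw [hg, hc]
    exact h
  have hgle : g ≤ 1 := by nlinarith
  have hip00 : (ip (d 0) (d 0)).re = 1 := by rw [hd 0]; simp
  have hip11 : (ip (d 1) (d 1)).re = 1 := by rw [hd 1]; simp
  rcases eq_or_lt_of_le hgle with hg1 | hglt
  · -- degenerate case ‖c‖ = 1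
    have ht : 1 - 4 * q 0 * q 1 * g^2 = (q 0 - q 1)^2 := by
      rw [hg1]; nlinarith [hqs]
    rcases le_total (q 1) (q 0) with h | h
    · refine ⟨![1, 0], ?_, ?_, ?_⟩
      · intro i; fin_cases i
        · simpa using Matrix.PosSemidef.one
        · simpa using (Matrix.PosSemidef.zero (n := Fin m) (R := ℂ))
      · simp [Fin.sum_univ_two]
      · rw [Fin.sum_univ_two]
        simp only [Matrix.cons_val_zero, Matrix.cons_val_one, Matrix.head_cons,
          Matrix.one_mulVec, Matrix.zero_mulVec]
        rw [hd 0]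
        have hz : ip (d 1) (0 : Fin m → ℂ) = 0 := by simp [ip]
        rw [hz, ht, Real.sqrt_sq_eq_abs, abs_of_nonneg (by linarith)]
        simp; linarith
    · refine ⟨![0, 1], ?_, ?_, ?_⟩
      · intro i; fin_cases i
        · simpa using (Matrix.PosSemidef.zero (n := Fin m) (R := ℂ))
        · simpa using Matrix.PosSemidef.one
      · simp [Fin.sum_univ_two]
      · rw [Fin.sum_univ_two]
        simp only [Matrix.cons_val_zero, Matrix.cons_val_one, Matrix.head_cons,
          Matrix.one_mulVec, Matrix.zero_mulVec]
        rw [hd 1]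
        have hz : ip (d 0) (0 : Fin m → ℂ) = 0 := by simp [ip]
        rw [hz, ht, Real.sqrt_sq_eq_abs, abs_of_nonpos (by linarith)]
        simp; linarith
  · -- main case ‖c‖ < 1
    have hq01 : 0 ≤ q 0 * q 1 := mul_nonneg hq0 hq1
    have hg2' : (0:ℝ) ≤ 1 - g^2 := by nlinarith
    obtain ⟨r, hrdef⟩ : ∃ r, r = Real.sqrt (1 - g^2) := ⟨_, rfl⟩
    have hr2 : r^2 = 1 - g^2 := by rw [hrdef]; exact Real.sq_sqrt hg2'
    have hrpos : 0 < r := by rw [hrdef]; exact Real.sqrt_pos.mpr (by nlinarith)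
    obtain ⟨st, hstdef⟩ : ∃ st, st = Real.sqrt (1 - 4 * q 0 * q 1 * g^2) := ⟨_, rfl⟩
    have ht0 : 0 ≤ 1 - 4 * q 0 * q 1 * g^2 := by
      nlinarith [sq_nonneg (q 0 - q 1), mul_nonneg hq01 hg2']
    have hst2 : st^2 = 1 - 4 * q 0 * q 1 * g^2 := by rw [hstdef]; exact Real.sq_sqrt ht0
    obtain ⟨lam, hlamdef⟩ : ∃ lam, lam = (q 0 - q 1 + st)/2 := ⟨_, rfl⟩
    have hlam0 : 0 ≤ lam := by
      have h1 : (q 1 - q 0)^2 ≤ 1 - 4 * q 0 * q 1 * g^2 := by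
        nlinarith [mul_nonneg hq01 hg2']
      have h2 := Real.le_sqrt_of_sq_le h1
      rw [← hstdef] at h2
      rw [hlamdef]; linarith
    have hchar : lam^2 = (q 0 - q 1)*lam + q 0*q 1*r^2 := by
      rw [hlamdef]
      linear_combination (1/4)*hst2 - (q 0*q 1)*hr2 - ((1+q 0+q 1)/4)*hqs
    have hlamq : 0 < lam + q 1*r^2 := by
      rcases eq_or_lt_of_le hq1 with h0 | h0
      · have hst1 : st = 1 := by
          rw [hstdef, show (1 - 4 * q 0 * q 1 * g^2) = 1 by rw [← h0]; ring, Real.sqrt_one]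
        have hq0' : q 0 = 1 := by linarith
        rw [hlamdef, hst1, hq0', ← h0]
        norm_num
      · nlinarith [mul_pos h0 (mul_pos hrpos hrpos)]
    obtain ⟨N, hNdef⟩ : ∃ N, N = Real.sqrt ((lam + q 1*r^2)^2 + (q 1*r*g)^2) := ⟨_, rfl⟩
    have hN2pos : 0 < (lam + q 1*r^2)^2 + (q 1*r*g)^2 :=
      add_pos_of_pos_of_nonneg (pow_pos hlamq 2) (sq_nonneg _)
    have hN2 : N^2 = (lam + q 1*r^2)^2 + (q 1*r*g)^2 := by
      rw [hNdef]; exact Real.sq_sqrt hN2pos.le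
    have hNpos : 0 < N := by rw [hNdef]; exact Real.sqrt_pos.mpr hN2pos
    have hNne : N ≠ 0 := hNpos.ne'
    have hNC : ((N:ℝ):ℂ) ≠ 0 := by exact_mod_cast hNne
    have hrC : ((r:ℝ):ℂ) ≠ 0 := by exact_mod_cast hrpos.ne'
    have hcc : c * (starRingEnd ℂ) c = ((g:ℝ):ℂ)^2 := by
      rw [Complex.mul_conj, Complex.normSq_eq_norm_sq, hg]
      push_cast
      ring
    have hcc' : (starRingEnd ℂ) c * c = ((g:ℝ):ℂ)^2 := by rw [mul_comm]; exact hcc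
    have hd1d0 : ip (d 1) (d 0) = (starRingEnd ℂ) c := by rw [ip_conj']
    have hrsq : ((1:ℂ) - ((g:ℝ):ℂ)^2) = ((r:ℝ):ℂ)^2 := by
      have h := congrArg Complex.ofReal hr2
      push_cast at h
      linear_combination -h
    obtain ⟨f, hfdef⟩ : ∃ f : Fin m → ℂ, f = (((r:ℝ):ℂ))⁻¹ • (d 1 - c • d 0) := ⟨_, rfl⟩
    have hd0f : ip (d 0) f = 0 := by
      rw [hfdef, ip_smul_right, ip_sub_right, ip_smul_right, hd 0, ← hc]
      all_goals ring
    have hfd0 : ip f (d 0) = 0 := by rw [ip_conj', hd0f]; simp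
    have hinner : ip (d 1 - c • d 0) (d 1 - c • d 0) = ((r:ℝ):ℂ)^2 := by
      rw [ip_sub_right, ip_sub_left, ip_sub_left, ip_smul_right, ip_smul_right,
        ip_smul_left, ip_smul_left, hd 0, hd 1, ← hc, hd1d0, ← hrsq]
      linear_combination -hcc
    have hff : ip f f = 1 := by
      rw [hfdef, ip_smul_right, ip_smul_left, hinner, map_inv₀, Complex.conj_ofReal]
      field_simp
    have hfd1 : ip f (d 1) = ((r:ℝ):ℂ) := by
      rw [hfdef, ip_smul_left, ip_sub_left, ip_smul_left, hd 1, ← hc, map_inv₀,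
        Complex.conj_ofReal, hcc', hrsq]
      field_simp
    have hd1f : ip (d 1) f = ((r:ℝ):ℂ) := by rw [ip_conj', hfd1, Complex.conj_ofReal]
    obtain ⟨μ, hμdef⟩ : ∃ μ : ℝ, μ = (lam + q 1*r^2)/N := ⟨_, rfl⟩
    obtain ⟨ν, hνdef⟩ : ∃ ν : ℂ, ν = -(((q 1*r/N : ℝ)):ℂ) * (starRingEnd ℂ) c := ⟨_, rfl⟩
    obtain ⟨v, hvdef⟩ : ∃ v : Fin m → ℂ, v = ((μ:ℝ):ℂ) • d 0 + ν • f := ⟨_, rfl⟩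
    have hconjν : (starRingEnd ℂ) ν = -(((q 1*r/N : ℝ)):ℂ) * c := by
      rw [hνdef]
      simp [Complex.conj_ofReal]
    have hvd0 : ip v (d 0) = ((μ:ℝ):ℂ) := by
      rw [hvdef, ip_add_left, ip_smul_left, ip_smul_left, hd 0, hfd0, Complex.conj_ofReal]
      ring
    have hd0v : ip (d 0) v = ((μ:ℝ):ℂ) := by rw [ip_conj', hvd0, Complex.conj_ofReal]
    have hvd1 : ip v (d 1) = ((lam/N : ℝ):ℂ) * c := by
      rw [hvdef, ip_add_left, ip_smul_left, ip_smul_left, ← hc, hfd1, Complex.conj_ofReal,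
        hconjν, hμdef]
      push_cast
      field_simp
      ring
    have hd1v : ip (d 1) v = ((lam/N : ℝ):ℂ) * (starRingEnd ℂ) c := by
      rw [ip_conj', hvd1]
      simp [Complex.conj_ofReal]
    have hrealnorm : μ^2 + (q 1*r/N)^2*g^2 = 1 := by
      have e : μ^2 + (q 1*r/N)^2*g^2 = ((lam + q 1*r^2)^2 + (q 1*r*g)^2)/N^2 := by
        rw [hμdef]
        field_simp
      rw [e, ← hN2]
      field_simp
    have hvf : ip v f = (starRingEnd ℂ) ν := by
      rw [hvdef, ip_add_left, ip_smul_left, ip_smul_left, hd0f, hff, Complex.conj_ofReal]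
      ring
    have hvv : ip v v = 1 := by
      nth_rewrite 2 [hvdef]
      rw [ip_add_right, ip_smul_right, ip_smul_right, hvd0, hvf, hconjν, hνdef]
      have hc2 := congrArg Complex.ofReal hrealnorm
      push_cast at hc2 ⊢
      linear_combination hc2 + ((q 1:ℝ):ℂ)^2*((r:ℝ):ℂ)^2/((N:ℝ):ℂ)^2 * hcc'
    refine ⟨![vecMulVec v (star v), 1 - vecMulVec v (star v)], ?_, ?_, ?_⟩
    · intro i; fin_cases i
      · simpa using vvstar_psd v
      · simpa using one_sub_vvstar_psd v hvv
    · simp [Fin.sum_univ_two]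
    · rw [Fin.sum_univ_two]
      simp only [Matrix.cons_val_zero, Matrix.cons_val_one, Matrix.head_cons]
      rw [ip_vvstar v (d 0) (d 0), hvd0, hd0v]
      have h1 : ip (d 1) ((1 - vecMulVec v (star v)) *ᵥ (d 1))
          = 1 - ip v (d 1) * ip (d 1) v := by
        rw [Matrix.sub_mulVec, ip_sub_right, Matrix.one_mulVec, hd 1, ip_vvstar]
      rw [h1, hvd1, hd1v]
      have e0 : (((μ:ℝ):ℂ) * ((μ:ℝ):ℂ)).re = μ^2 := by
        rw [show ((μ:ℝ):ℂ) * ((μ:ℝ):ℂ) = ((μ^2 : ℝ):ℂ) by push_cast; ring, Complex.ofReal_re]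
      have e1 : ((1:ℂ) - (((lam/N : ℝ):ℂ) * c) * (((lam/N : ℝ):ℂ) * (starRingEnd ℂ) c)).re
          = 1 - (lam/N)^2*g^2 := by
        rw [show (((lam/N : ℝ):ℂ) * c) * (((lam/N : ℝ):ℂ) * (starRingEnd ℂ) c)
            = ((lam/N:ℝ):ℂ)^2 * (c * (starRingEnd ℂ) c) by ring, hcc]
        rw [show (1:ℂ) - ((lam/N:ℝ):ℂ)^2 * ((g:ℝ):ℂ)^2 = ((1 - (lam/N)^2*g^2 : ℝ):ℂ) by
          push_cast; ring, Complex.ofReal_re]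
      rw [e0, e1]
      have key2 : (q 0 - lam)*(lam + q 1*r^2) = q 1*g^2*lam := by
        linear_combination (-1)*hchar - (q 1*lam)*hr2
      have hval2 : q 0*(lam + q 1*r^2)^2
          + q 1*(((lam + q 1*r^2)^2 + (q 1*r*g)^2) - g^2*lam^2)
          = (q 1 + lam)*((lam + q 1*r^2)^2 + (q 1*r*g)^2) := by
        linear_combination (lam + q 1*r^2)*key2
      have hfin : q 1 + lam = q 0 * μ^2 + q 1 * (1 - (lam/N)^2*g^2) := by
        have e : q 0 * μ^2 + q 1 * (1 - (lam/N)^2*g^2)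
            = (q 0*(lam + q 1*r^2)^2 + q 1*(((lam + q 1*r^2)^2 + (q 1*r*g)^2) - g^2*lam^2))
              /((lam + q 1*r^2)^2 + (q 1*r*g)^2) := by
          rw [hμdef, ← hN2]
          field_simp
        rw [e, hval2, mul_div_assoc, div_self hN2pos.ne', mul_one]
      rw [← hfin, hlamdef, ← hstdef]
      linarith

lemma Ps_eq {m : ℕ} (d : Fin 2 → Fin m → ℂ) (hd : ∀ i, ip (d i) (d i) = 1)
    (q : Fin 2 → ℝ) (hq0 : 0 ≤ q 0) (hq1 : 0 ≤ q 1) (hqs : q 0 + q 1 = 1) :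
    Ps d q = (1 + Real.sqrt (1 - 4 * q 0 * q 1 * ‖ip (d 0) (d 1)‖^2))/2 := by
  obtain ⟨Pov, hpsd, hsum, hval⟩ := Ps_mem d hd q hq0 hq1 hqs
  set V := (1 + Real.sqrt (1 - 4 * q 0 * q 1 * ‖ip (d 0) (d 1)‖^2))/2 with hV
  set S := { x : ℝ | ∃ Pov : Fin 2 → Matrix (Fin m) (Fin m) ℂ,
    (∀ i, (Pov i).PosSemidef) ∧ (∑ i, Pov i) = 1 ∧
    x = ∑ i, q i * (ip (d i) ((Pov i) *ᵥ (d i))).re } with hS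
  have hmem : V ∈ S := ⟨Pov, hpsd, hsum, hval⟩
  have hub : ∀ x ∈ S, x ≤ V := by
    rintro x ⟨P, hP, hPs, rfl⟩
    have h := Ps_ub d hd q hq0 hq1 hqs P hP hPs
    rw [Fin.sum_univ_two]
    exact h
  have : Ps d q = sSup S := rfl
  rw [this]
  exact le_antisymm (csSup_le ⟨V, hmem⟩ hub) (le_csSup ⟨V, fun x hx => hub x hx⟩ hmem)

lemma conj_mul_self' (z : ℂ) : (starRingEnd ℂ) z * z = ((‖z‖^2 : ℝ) : ℂ) := by
  rw [← Complex.normSq_eq_conj_mul_self, Complex.normSq_eq_norm_sq]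

end Aux

/-- the complete wave-particle duality for a pure input state of the
particle (without quantum memory) in the two-path interferometer with detectors. -/
theorem stmt12 (m : ℕ) (d : Fin 2 → Fin m → ℂ)
    (hd : ∀ i, ip (d i) (d i) = 1)
    (ψ : Fin 2 → ℂ) (hψ : ip ψ ψ = 1)
    (ρA : Matrix (Fin 2) (Fin 2) ℂ) (hρA : ρA = vecMulVec ψ (star ψ))
    (q : Fin 2 → ℝ) (hq : ∀ i, q i = ‖ψ i‖ ^ 2) :
    (Ps d q - 1 / 2) ^ 2 + (Vis d ρA) ^ 2 = 1 / 4 := by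
  have hq0 : 0 ≤ q 0 := by rw [hq 0]; positivity
  have hq1 : 0 ≤ q 1 := by rw [hq 1]; positivity
  have hqs : q 0 + q 1 = 1 := by
    have h := congrArg Complex.re hψ
    rw [ip, Fin.sum_univ_two] at h
    simp only [Complex.star_def] at h
    rw [conj_mul_self', conj_mul_self'] at h
    rw [← Complex.ofReal_add, Complex.ofReal_re, Complex.one_re] at h
    rw [hq 0, hq 1]
    exact h
  set g := ‖ip (d 0) (d 1)‖ with hg
  have hg0 : 0 ≤ g := norm_nonneg _
  have hg2le : g^2 ≤ 1 := by
    have h := ip_cs (d 0) (d 1)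
    rw [hd 0, hd 1] at h
    simp only [Complex.one_re, one_mul] at h
    rw [hg]
    exact h
  have hq01 : 0 ≤ q 0 * q 1 := mul_nonneg hq0 hq1
  have ht0 : 0 ≤ 1 - 4 * q 0 * q 1 * g^2 := by
    nlinarith [sq_nonneg (q 0 - q 1), mul_nonneg hq01 (by nlinarith : (0:ℝ) ≤ 1 - g^2)]
  have hPs : Ps d q = (1 + Real.sqrt (1 - 4 * q 0 * q 1 * g^2))/2 :=
    Ps_eq d hd q hq0 hq1 hqs
  have h01 : ‖ρA 0 1‖^2 = q 0 * q 1 := by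
    rw [hρA, hq 0, hq 1]
    simp [Matrix.vecMulVec_apply, norm_mul, mul_pow]
  have h10 : ‖ρA 1 0‖^2 = q 0 * q 1 := by
    rw [hρA, hq 0, hq 1]
    simp [Matrix.vecMulVec_apply, norm_mul, mul_pow]
    ring
  have hsym : ‖ip (d 1) (d 0)‖ = g := by
    rw [ip_conj' (d 0) (d 1), hg]
    simp
  have hVis : (Vis d ρA)^2 = g^2 * (q 0 * q 1) := by
    rw [Vis, Real.sq_sqrt]
    · simp only [Fin.sum_univ_two, reduceIte, if_true, if_false]
      rw [h01, h10, hsym, ← hg]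
      push_cast
      ring
    · apply mul_nonneg
      · norm_num
      · apply Finset.sum_nonneg
        intro i _
        apply Finset.sum_nonneg
        intro k _
        by_cases hik : i = k <;> simp [hik] <;> positivity
  rw [hPs, hVis]
  rw [show (1 + Real.sqrt (1 - 4 * q 0 * q 1 * g^2))/2 - 1/2
      = Real.sqrt (1 - 4 * q 0 * q 1 * g^2)/2 by ring]
  rw [div_pow, Real.sq_sqrt ht0]
  ring
end
end

section
/- Let n ≥ 2, let d_1, …, d_n be unit vectors in ℂ^m, and let q = (q_1,…,q_n) be a probability vector. Then the optimal success probability satisfies P_s(q) ≤ 1/n + (1/n) Σ_{i<k} √( (q_i + q_k)² − 4 q_i q_k |⟨d_i, d_k⟩|² ). -/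
open Matrix ComplexOrder

noncomputable section

variable {M : ℕ}

lemma ip_add_right_s14 (a b c : Fin M → ℂ) : ip a (b + c) = ip a b + ip a c := by
  simp [ip, mul_add, Finset.sum_add_distrib]
lemma ip_smul_right_s14 (a b : Fin M → ℂ) (z : ℂ) : ip a (z • b) = z * ip a b := by
  simp only [ip, Finset.mul_sum, Pi.smul_apply, smul_eq_mul]
  exact Finset.sum_congr rfl fun i _ => by ring
lemma ip_add_left_s14 (a b c : Fin M → ℂ) : ip (a + b) c = ip a c + ip b c := by
  simp [ip, add_mul, Finset.sum_add_distrib]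
lemma ip_smul_left_s14 (a b : Fin M → ℂ) (z : ℂ) : ip (z • a) b = star z * ip a b := by
  simp only [ip, Finset.mul_sum, Pi.smul_apply, smul_eq_mul, star_mul']
  exact Finset.sum_congr rfl fun i _ => by ring
lemma herm_cross {A : Matrix (Fin M) (Fin M) ℂ} (hA : A.IsHermitian) (u v : Fin M → ℂ) :
    ip v (A *ᵥ u) = star (ip u (A *ᵥ v)) := by
  simp only [ip, Matrix.mulVec, dotProduct, star_sum, star_mul', star_star,
    Finset.mul_sum]
  rw [Finset.sum_comm]
  refine Finset.sum_congr rfl fun i _ => Finset.sum_congr rfl fun j _ => ?_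
  have h : A j i = star (A i j) := by
    conv_lhs => rw [← hA]
    simp [Matrix.conjTranspose_apply]
  rw [h]; ring

lemma quad_expand {A : Matrix (Fin M) (Fin M) ℂ} (hA : A.IsHermitian)
    (u v : Fin M → ℂ) (α : ℝ) (z : ℂ) :
    (ip ((α:ℂ) • u + z • v) (A *ᵥ ((α:ℂ) • u + z • v))).re
      = α ^ 2 * (ip u (A *ᵥ u)).re + ‖z‖ ^ 2 * (ip v (A *ᵥ v)).re
        + 2 * α * (z * ip u (A *ᵥ v)).re := by
  have hz : (starRingEnd ℂ) z * z = ((‖z‖:ℂ))^2 := by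
    rw [← Complex.normSq_eq_conj_mul_self]
    rw [show Complex.normSq z = ‖z‖^2 by rw [Complex.normSq_eq_norm_sq]]
    push_cast; ring
  have expand : ip ((α:ℂ) • u + z • v) (A *ᵥ ((α:ℂ) • u + z • v))
      = (α:ℂ)^2 * ip u (A *ᵥ u) + ((‖z‖:ℂ))^2 * ip v (A *ᵥ v)
        + (α:ℂ) * (z * ip u (A *ᵥ v) + star (z * ip u (A *ᵥ v))) := by
    simp only [Matrix.mulVec_add, Matrix.mulVec_smul, ip_add_left_s14, ip_add_right_s14,
      ip_smul_left_s14, ip_smul_right_s14]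
    rw [herm_cross hA u v, Complex.star_def, RingHom.map_mul, Complex.conj_ofReal]
    linear_combination (ip v (A *ᵥ v)) * hz
  rw [expand]
  simp only [Complex.add_re, Complex.mul_re, ← Complex.ofReal_pow, Complex.ofReal_re,
    Complex.ofReal_im, Complex.add_im, Complex.conj_re, Complex.conj_im, Complex.star_def]
  ring


lemma ip_sum_right {k ι : Type*} [Fintype k] (a : k → ℂ) (s : Finset ι) (f : ι → k → ℂ) :
    ip a (∑ j ∈ s, f j) = ∑ j ∈ s, ip a (f j) := by
  simp only [ip, Finset.sum_apply, Finset.mul_sum]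
  rw [Finset.sum_comm]

lemma sum_mulVec' {k ι : Type*} [Fintype k] [DecidableEq k] (s : Finset ι)
    (A : ι → Matrix k k ℂ) (v : k → ℂ) :
    (∑ j ∈ s, A j) *ᵥ v = ∑ j ∈ s, A j *ᵥ v := by
  ext i
  simp only [Matrix.mulVec, dotProduct, Finset.sum_apply, Matrix.sum_apply,
    Finset.sum_mul]
  rw [Finset.sum_comm]


lemma scalar_opt (S G L : ℝ) (hS : 0 ≤ S) (hG : 0 ≤ G) (hGS : G ^ 2 ≤ S ^ 2)
    (H : ∀ x : ℝ, 0 ≤ x → L ≤ S * (1 + 2 * x) - 2 * G * Real.sqrt (x ^ 2 + x)) :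
    L ≤ Real.sqrt (S ^ 2 - G ^ 2) := by
  set R := Real.sqrt (S ^ 2 - G ^ 2) with hR
  have hR0 : 0 ≤ R := Real.sqrt_nonneg _
  have hRsq : R ^ 2 = S ^ 2 - G ^ 2 := Real.sq_sqrt (by linarith)
  rcases eq_or_lt_of_le hR0 with h0 | hpos
  · -- R = 0, so G = S
    have h00 : S ^ 2 - G ^ 2 = 0 := by rw [← hRsq, ← h0]; ring
    have hGS' : G = S := by nlinarith
    by_contra hc
    push_neg at hc
    rw [← h0] at hc
    have hLpos : 0 < L := hc
    have hx0 : (0:ℝ) ≤ S / (2 * L) := by positivity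
    have hkey := H (S / (2 * L)) hx0
    set x := S / (2 * L) with hxdef
    have hxx0 : (0:ℝ) ≤ x ^ 2 + x := by positivity
    have hsq : Real.sqrt (x ^ 2 + x) * Real.sqrt (x ^ 2 + x) = x ^ 2 + x :=
      Real.mul_self_sqrt hxx0
    have hB : (0:ℝ) < 1 + 2 * x := by linarith
    have hs0 : 0 ≤ Real.sqrt (x ^ 2 + x) := Real.sqrt_nonneg _
    have key : ((1 + 2*x) - 2 * Real.sqrt (x^2+x)) * ((1 + 2*x) + 2 * Real.sqrt (x^2+x)) = 1 := by
      nlinarith [hsq]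
    have hA1 : (1 + 2*x) - 2 * Real.sqrt (x^2+x) = 1 / ((1 + 2*x) + 2 * Real.sqrt (x^2+x)) :=
      eq_one_div_of_mul_eq_one_left (by nlinarith [key])
    have hA : (1 + 2*x) - 2 * Real.sqrt (x^2+x) ≤ 1 / (1 + 2*x) := by
      rw [hA1]
      exact one_div_le_one_div_of_le hB (by linarith)
    have hchain : L ≤ S * (1 / (1 + 2*x)) := by
      calc L ≤ S * (1 + 2 * x) - 2 * G * Real.sqrt (x ^ 2 + x) := hkey
        _ = S * ((1 + 2*x) - 2 * Real.sqrt (x^2+x)) := by rw [hGS']; ring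
        _ ≤ S * (1 / (1 + 2*x)) := mul_le_mul_of_nonneg_left hA hS
    have h12 : 1 + 2 * x = (L + S) / L := by rw [hxdef]; field_simp
    have hfin : S * (1 / (1 + 2*x)) < L := by
      rw [h12]
      rw [one_div_div, show S * (L / (L + S)) = S * L / (L + S) by ring,
        div_lt_iff₀ (by linarith)]
      nlinarith
    linarith
  · -- R > 0 : pick x = (S - R)/(2R)
    have hRS : R ≤ S := by nlinarith
    have hx0 : (0:ℝ) ≤ (S - R) / (2 * R) := div_nonneg (by linarith) (by linarith)
    have hkey := H ((S - R) / (2 * R)) hx0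
    set x := (S - R) / (2 * R) with hxdef
    have h1 : 1 + 2 * x = S / R := by rw [hxdef]; field_simp; ring
    have hxx : x ^ 2 + x = (G / (2 * R)) ^ 2 := by
      rw [hxdef]; field_simp; linear_combination (-1:ℝ) * hRsq
    have hsqrt : Real.sqrt (x ^ 2 + x) = G / (2 * R) := by
      rw [hxx]; exact Real.sqrt_sq (by positivity)
    rw [hsqrt, h1] at hkey
    have e : S * (S / R) - 2 * G * (G / (2 * R)) = (S ^ 2 - G ^ 2) / R := by ring
    rw [e, ← hRsq, sq, mul_div_assoc, div_self hpos.ne', mul_one] at hkey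
    exact hkey


lemma ip_cs_s14 {M : ℕ} (u v : Fin M → ℂ) (hu : ip u u = 1) (hv : ip v v = 1) :
    ‖ip u v‖ ≤ 1 := by
  let u' : EuclideanSpace ℂ (Fin M) := WithLp.toLp 2 u
  let v' : EuclideanSpace ℂ (Fin M) := WithLp.toLp 2 v
  have hiuv : (inner ℂ u' v') = ip u v := by
    simp [PiLp.inner_apply, ip, RCLike.inner_apply, u', v', mul_comm]
  have hnu : ‖u'‖ = 1 := by
    have h1 : (inner ℂ u' u') = ((‖u'‖ : ℂ))^2 := inner_self_eq_norm_sq_to_K u'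
    have h2 : (inner ℂ u' u') = 1 := by
      rw [show (inner ℂ u' u') = ip u u from by
        rw [PiLp.inner_apply]; simp [ip, RCLike.inner_apply, u', mul_comm]
        exact Finset.sum_congr rfl fun i _ => by
          rw [Complex.mul_conj, Complex.normSq_eq_norm_sq]; push_cast; ring, hu]
    have : ((‖u'‖ : ℂ))^2 = 1 := by rw [← h1, h2]
    have h3 : ‖u'‖^2 = 1 := by exact_mod_cast this
    nlinarith [norm_nonneg u']
  have hnv : ‖v'‖ = 1 := by
    have h1 : (inner ℂ v' v') = ((‖v'‖ : ℂ))^2 := inner_self_eq_norm_sq_to_K v'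
    have h2 : (inner ℂ v' v') = 1 := by
      rw [show (inner ℂ v' v') = ip v v from by
        rw [PiLp.inner_apply]; simp [ip, RCLike.inner_apply, v', mul_comm]
        exact Finset.sum_congr rfl fun i _ => by
          rw [Complex.mul_conj, Complex.normSq_eq_norm_sq]; push_cast; ring, hv]
    have : ((‖v'‖ : ℂ))^2 = 1 := by rw [← h1, h2]
    have h3 : ‖v'‖^2 = 1 := by exact_mod_cast this
    nlinarith [norm_nonneg v']
  calc ‖ip u v‖ = ‖(inner ℂ u' v')‖ := by rw [hiuv]
    _ ≤ ‖u'‖ * ‖v'‖ := norm_inner_le_norm u' v'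
    _ = 1 := by rw [hnu, hnv]; ring


lemma sum_pairs_eq {n : ℕ} (T : Fin n → Fin n → ℝ) :
    ∑ j, ∑ k, (if j < k then T j j + T k k - T k j - T j k else 0)
      = n * (∑ j, T j j) - ∑ j, ∑ k, T j k := by
  set F : Fin n → Fin n → ℝ := fun j k => T j j + T k k - T k j - T j k with hF
  have hFsymm : ∀ j k, F j k = F k j := by intro j k; simp [hF]; ring
  have hdecomp : ∀ j k : Fin n, F j k
      = (if j < k then F j k else 0) + (if k < j then F j k else 0)
        + (if j = k then F j k else 0) := by
    intro j k
    rcases lt_trichotomy j k with h | h | h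
    · simp [h, asymm h, h.ne]
    · simp [h, lt_irrefl]
    · simp [h, asymm h, h.ne']
  have hinner : ∀ j, ∑ k, F j k
      = (n:ℝ) * T j j + (∑ k, T k k) - (∑ k, T k j) - (∑ k, T j k) := by
    intro j
    simp only [hF, Finset.sum_sub_distrib, Finset.sum_add_distrib, Finset.sum_const,
      Finset.card_univ, Fintype.card_fin, nsmul_eq_mul]
  have htot : ∑ j, ∑ k, F j k = 2 * ((n:ℝ) * ∑ j, T j j) - 2 * ∑ j, ∑ k, T j k := by
    rw [Finset.sum_congr rfl fun j _ => hinner j]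
    simp only [Finset.sum_sub_distrib, Finset.sum_add_distrib, Finset.sum_const,
      Finset.card_univ, Fintype.card_fin, nsmul_eq_mul, ← Finset.mul_sum]
    rw [Finset.sum_comm (f := fun j k => T k j)]
    ring
  have hswap : ∑ j, ∑ k, (if k < j then F j k else 0)
      = ∑ j, ∑ k, (if j < k then F j k else 0) := by
    rw [Finset.sum_comm]
    refine Finset.sum_congr rfl fun j _ => Finset.sum_congr rfl fun k _ => ?_
    rw [hFsymm j k]
  have hdiag : ∑ j : Fin n, ∑ k : Fin n, (if j = k then F j k else 0) = 0 := by
    rw [Finset.sum_eq_zero]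
    intro j _
    rw [Finset.sum_eq_zero]
    intro k _
    split_ifs with h
    · subst h; simp [hF]
    · rfl
  have : ∑ j, ∑ k, F j k
      = ∑ j, ∑ k, (if j < k then F j k else 0)
        + ∑ j, ∑ k, (if k < j then F j k else 0)
        + ∑ j, ∑ k, (if j = k then F j k else 0) := by
    rw [← Finset.sum_add_distrib, ← Finset.sum_add_distrib]
    refine Finset.sum_congr rfl fun j _ => ?_
    rw [← Finset.sum_add_distrib, ← Finset.sum_add_distrib]
    exact Finset.sum_congr rfl fun k _ => hdecomp j k
  rw [hswap, hdiag] at this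
  -- F = T form in goal
  have hgoal : ∑ j, ∑ k, (if j < k then T j j + T k k - T k j - T j k else 0)
      = ∑ j, ∑ k, (if j < k then F j k else 0) := rfl
  rw [hgoal]
  linarith [htot, this]


lemma pair_bound (Pi Pk : Matrix (Fin M) (Fin M) ℂ)
    (hIi : Pi.IsHermitian) (hIk : Pk.IsHermitian)
    (hQi : ∀ w, 0 ≤ (ip w (Pi *ᵥ w)).re) (hQk : ∀ w, 0 ≤ (ip w (Pk *ᵥ w)).re)
    (hub : ∀ w, (ip w (Pi *ᵥ w)).re + (ip w (Pk *ᵥ w)).re ≤ (ip w w).re)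
    (u v : Fin M → ℂ) (hu : ip u u = 1) (hv : ip v v = 1)
    (qi qk : ℝ) (hqi : 0 ≤ qi) (hqk : 0 ≤ qk) :
    qi * (ip u (Pi *ᵥ u)).re - qi * (ip u (Pk *ᵥ u)).re
      - qk * (ip v (Pi *ᵥ v)).re + qk * (ip v (Pk *ᵥ v)).re
      ≤ Real.sqrt ((qi + qk) ^ 2 - 4 * qi * qk * ‖ip u v‖ ^ 2) := by
  set γ := ip u v with hγ
  set g := ‖γ‖ with hg
  have hg0 : 0 ≤ g := norm_nonneg _
  have hg1 : g ≤ 1 := ip_cs_s14 u v hu hv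
  set e : ℂ := if γ = 0 then 1 else -(starRingEnd ℂ γ) / (g : ℂ) with he
  have he1 : ‖e‖ = 1 := by
    rw [he]
    split_ifs with h
    · simp
    · have : g ≠ 0 := by simpa [hg] using h
      rw [norm_div, norm_neg, RingHomIsometric.norm_map]
      simp only [Complex.norm_real, Real.norm_eq_abs, abs_of_nonneg hg0]
      rw [← hg]
      field_simp
  have heγ : e * γ = -(g : ℂ) := by
    rw [he]
    split_ifs with h
    · simp [h, hg]
    · have hgne : (g:ℂ) ≠ 0 := by
        simpa [hg, Complex.ofReal_eq_zero, norm_eq_zero] using h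
      have hmc : (starRingEnd ℂ) γ * γ = ((g:ℂ))^2 := by
        rw [show (starRingEnd ℂ) γ * γ = γ * (starRingEnd ℂ) γ from mul_comm _ _,
          Complex.mul_conj]
        rw [show Complex.normSq γ = g^2 by
          rw [hg, Complex.normSq_eq_norm_sq]]
        push_cast; ring
      field_simp
      linear_combination (-1:ℂ) * hmc
  have hγre : (e * γ).re = -g := by rw [heγ]; simp
  have hγ0 : γ = ip u v := rfl
  -- the scalar bound
  have hS : (0:ℝ) ≤ qi + qk := by linarith
  have hsq0 : (0:ℝ) ≤ Real.sqrt (qi * qk) := Real.sqrt_nonneg _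
  have hsq2 : Real.sqrt (qi * qk) ^ 2 = qi * qk := Real.sq_sqrt (mul_nonneg hqi hqk)
  have hGS : (2 * g * Real.sqrt (qi * qk)) ^ 2 ≤ (qi + qk) ^ 2 := by
    have h1 : (2 * g * Real.sqrt (qi * qk)) ^ 2 = 4 * g^2 * (qi*qk) := by
      rw [mul_pow, mul_pow, hsq2]; ring
    rw [h1]
    have hg2 : g ^ 2 ≤ 1 := by nlinarith
    have h3 : 4 * g ^ 2 * (qi * qk) ≤ 4 * (qi * qk) := by
      nlinarith [mul_nonneg hqi hqk]
    nlinarith [sq_nonneg (qi - qk)]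
  have H : ∀ x : ℝ, 0 ≤ x →
      qi * ((ip u (Pi *ᵥ u)).re - (ip u (Pk *ᵥ u)).re)
        - qk * ((ip v (Pi *ᵥ v)).re - (ip v (Pk *ᵥ v)).re)
      ≤ (qi + qk) * (1 + 2 * x)
        - 2 * (2 * g * Real.sqrt (qi * qk)) * Real.sqrt (x ^ 2 + x) := by
    intro x hx
    have hx1 : (0:ℝ) ≤ 1 + x := by linarith
    set p := Real.sqrt (qi * qk) * Real.sqrt (x ^ 2 + x) with hp
    set α := Real.sqrt (qi * (1 + x)) with hα
    set β := Real.sqrt (qk * x) with hβ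
    set α' := Real.sqrt (qi * x) with hα'
    set β' := Real.sqrt (qk * (1 + x)) with hβ'
    have hα2 : α ^ 2 = qi * (1 + x) := Real.sq_sqrt (mul_nonneg hqi hx1)
    have hβ2 : β ^ 2 = qk * x := Real.sq_sqrt (mul_nonneg hqk hx)
    have hα'2 : α' ^ 2 = qi * x := Real.sq_sqrt (mul_nonneg hqi hx)
    have hβ'2 : β' ^ 2 = qk * (1 + x) := Real.sq_sqrt (mul_nonneg hqk hx1)
    have hab : α * β = p := by
      rw [hα, hβ, hp, ← Real.sqrt_mul (mul_nonneg hqi hx1),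
        ← Real.sqrt_mul (mul_nonneg hqi hqk)]
      congr 1; ring
    have hab' : α' * β' = p := by
      rw [hα', hβ', hp, ← Real.sqrt_mul (mul_nonneg hqi hx),
        ← Real.sqrt_mul (mul_nonneg hqi hqk)]
      congr 1; ring
    have hzβ : ‖(β:ℂ) * e‖ ^ 2 = β ^ 2 := by
      rw [norm_mul, he1, mul_one, Complex.norm_real, Real.norm_eq_abs,
        abs_of_nonneg (Real.sqrt_nonneg _)]
    have hzβ' : ‖(β':ℂ) * e‖ ^ 2 = β' ^ 2 := by
      rw [norm_mul, he1, mul_one, Complex.norm_real, Real.norm_eq_abs,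
        abs_of_nonneg (Real.sqrt_nonneg _)]
    have hcross : ∀ (r : ℝ) (wc : ℂ), (((r:ℂ) * e) * wc).re = r * (e * wc).re := by
      intro r wc; rw [mul_assoc, Complex.re_ofReal_mul]
    -- identity expansions
    have E1n : (ip ((α:ℂ) • u + ((β:ℂ) * e) • v) ((α:ℂ) • u + ((β:ℂ) * e) • v)).re
        = α ^ 2 + β ^ 2 - 2 * α * (β * g) := by
      have h := quad_expand (A := (1 : Matrix (Fin M) (Fin M) ℂ))
        Matrix.isHermitian_one u v α ((β:ℂ) * e)
      simp only [Matrix.one_mulVec] at h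
      rw [h, hu, hv, ← hγ0, hcross β γ, hγre, Complex.one_re, hzβ]
      ring
    have E2n : (ip ((α':ℂ) • u + ((β':ℂ) * e) • v) ((α':ℂ) • u + ((β':ℂ) * e) • v)).re
        = α' ^ 2 + β' ^ 2 - 2 * α' * (β' * g) := by
      have h := quad_expand (A := (1 : Matrix (Fin M) (Fin M) ℂ))
        Matrix.isHermitian_one u v α' ((β':ℂ) * e)
      simp only [Matrix.one_mulVec] at h
      rw [h, hu, hv, ← hγ0, hcross β' γ, hγre, Complex.one_re, hzβ']
      ring
    -- constraints
    have C1 : α^2 * (ip u (Pi *ᵥ u)).re + β^2 * (ip v (Pi *ᵥ v)).re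
          + 2 * α * (β * (e * ip u (Pi *ᵥ v)).re)
        - (α^2 * (ip u (Pk *ᵥ u)).re + β^2 * (ip v (Pk *ᵥ v)).re
          + 2 * α * (β * (e * ip u (Pk *ᵥ v)).re))
        ≤ α ^ 2 + β ^ 2 - 2 * α * (β * g) := by
      have h1 := hub ((α:ℂ) • u + ((β:ℂ) * e) • v)
      have h2 := hQk ((α:ℂ) • u + ((β:ℂ) * e) • v)
      rw [quad_expand hIi u v α ((β:ℂ) * e), quad_expand hIk u v α ((β:ℂ) * e),
        E1n, hzβ, hcross β (ip u (Pi *ᵥ v)), hcross β (ip u (Pk *ᵥ v))] at h1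
      rw [quad_expand hIk u v α ((β:ℂ) * e), hzβ, hcross β (ip u (Pk *ᵥ v))] at h2
      linarith
    have C2 : -(α' ^ 2 + β' ^ 2 - 2 * α' * (β' * g))
        ≤ α'^2 * (ip u (Pi *ᵥ u)).re + β'^2 * (ip v (Pi *ᵥ v)).re
          + 2 * α' * (β' * (e * ip u (Pi *ᵥ v)).re)
        - (α'^2 * (ip u (Pk *ᵥ u)).re + β'^2 * (ip v (Pk *ᵥ v)).re
          + 2 * α' * (β' * (e * ip u (Pk *ᵥ v)).re)) := by
      have h1 := hub ((α':ℂ) • u + ((β':ℂ) * e) • v)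
      have h2 := hQi ((α':ℂ) • u + ((β':ℂ) * e) • v)
      rw [quad_expand hIi u v α' ((β':ℂ) * e), quad_expand hIk u v α' ((β':ℂ) * e),
        E2n, hzβ', hcross β' (ip u (Pi *ᵥ v)), hcross β' (ip u (Pk *ᵥ v))] at h1
      rw [quad_expand hIi u v α' ((β':ℂ) * e), hzβ', hcross β' (ip u (Pi *ᵥ v))] at h2
      linarith
    -- monomial equalities
    have mAiu : α^2 * (ip u (Pi *ᵥ u)).re = qi * (1+x) * (ip u (Pi *ᵥ u)).re := by rw [hα2]
    have mAku : α^2 * (ip u (Pk *ᵥ u)).re = qi * (1+x) * (ip u (Pk *ᵥ u)).re := by rw [hα2]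
    have mAiv : β^2 * (ip v (Pi *ᵥ v)).re = qk * x * (ip v (Pi *ᵥ v)).re := by rw [hβ2]
    have mAkv : β^2 * (ip v (Pk *ᵥ v)).re = qk * x * (ip v (Pk *ᵥ v)).re := by rw [hβ2]
    have mAiu' : α'^2 * (ip u (Pi *ᵥ u)).re = qi * x * (ip u (Pi *ᵥ u)).re := by rw [hα'2]
    have mAku' : α'^2 * (ip u (Pk *ᵥ u)).re = qi * x * (ip u (Pk *ᵥ u)).re := by rw [hα'2]
    have mAiv' : β'^2 * (ip v (Pi *ᵥ v)).re = qk * (1+x) * (ip v (Pi *ᵥ v)).re := by rw [hβ'2]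
    have mAkv' : β'^2 * (ip v (Pk *ᵥ v)).re = qk * (1+x) * (ip v (Pk *ᵥ v)).re := by rw [hβ'2]
    have mc1 : α * (β * (e * ip u (Pi *ᵥ v)).re) = p * (e * ip u (Pi *ᵥ v)).re := by
      rw [← hab]; ring
    have mc2 : α * (β * (e * ip u (Pk *ᵥ v)).re) = p * (e * ip u (Pk *ᵥ v)).re := by
      rw [← hab]; ring
    have mc1' : α' * (β' * (e * ip u (Pi *ᵥ v)).re) = p * (e * ip u (Pi *ᵥ v)).re := by
      rw [← hab']; ring
    have mc2' : α' * (β' * (e * ip u (Pk *ᵥ v)).re) = p * (e * ip u (Pk *ᵥ v)).re := by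
      rw [← hab']; ring
    have mg : α * (β * g) = p * g := by rw [← hab]; ring
    have mg' : α' * (β' * g) = p * g := by rw [← hab']; ring
    have mtarget : 2 * (2 * g * Real.sqrt (qi * qk)) * Real.sqrt (x ^ 2 + x)
        = 4 * (p * g) := by rw [hp]; ring
    rw [mtarget]
    linarith [C1, C2, mAiu, mAku, mAiv, mAkv, mAiu', mAku', mAiv', mAkv',
      mc1, mc2, mc1', mc2', mg, mg', hα2, hβ2, hα'2, hβ'2]
  have main := scalar_opt (qi + qk) (2 * g * Real.sqrt (qi * qk)) _
    hS (by positivity) hGS H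
  have harg : (qi + qk) ^ 2 - (2 * g * Real.sqrt (qi * qk)) ^ 2
      = (qi + qk) ^ 2 - 4 * qi * qk * g ^ 2 := by
    rw [mul_pow, mul_pow, hsq2]; ring
  rw [harg] at main
  linarith [main]


/-- upper bound on the optimal success probability of minimum-error
discrimination of the detector states. -/
theorem stmt14 (n m : ℕ) (hn : 2 ≤ n) (d : Fin n → Fin m → ℂ)
    (hd : ∀ i, ip (d i) (d i) = 1)
    (q : Fin n → ℝ) (hq : ∀ i, 0 ≤ q i) (hq1 : ∑ i, q i = 1) :
    Ps d q ≤ 1 / n + (1 / (n : ℝ)) *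
      ∑ i, ∑ k, if i < k then
        Real.sqrt ((q i + q k) ^ 2 - 4 * q i * q k * ‖ip (d i) (d k)‖ ^ 2)
      else 0 := by
  have hn0 : (0:ℝ) < n := by
    have : 0 < n := by omega
    exact_mod_cast this
  set B : ℝ := ∑ i, ∑ k, if i < k then
      Real.sqrt ((q i + q k) ^ 2 - 4 * q i * q k * ‖ip (d i) (d k)‖ ^ 2)
    else 0 with hB
  have hB0 : 0 ≤ B := by
    refine Finset.sum_nonneg fun i _ => Finset.sum_nonneg fun k _ => ?_
    split_ifs with h
    · exact Real.sqrt_nonneg _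
    · exact le_refl 0
  unfold Ps
  apply Real.sSup_le
  · rintro x ⟨Pov, hP, hPsum, rfl⟩
    have hherm : ∀ j, (Pov j).IsHermitian := fun j => (hP j).1
    have hQ : ∀ j w, 0 ≤ (ip w (Pov j *ᵥ w)).re := by
      intro j w
      have h := (hP j).dotProduct_mulVec_nonneg w
      have h2 := (Complex.le_def.mp h).1
      simpa [ip, dotProduct] using h2
    have hsumQ : ∀ w : Fin m → ℂ, ∑ j, (ip w (Pov j *ᵥ w)).re = (ip w w).re := by
      intro w
      have h1 : ∑ j, ip w (Pov j *ᵥ w) = ip w w := by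
        rw [← ip_sum_right, ← sum_mulVec', hPsum, Matrix.one_mulVec]
      rw [← Complex.re_sum, h1]
    have hub : ∀ (j k : Fin n), j ≠ k → ∀ w : Fin m → ℂ,
        (ip w (Pov j *ᵥ w)).re + (ip w (Pov k *ᵥ w)).re ≤ (ip w w).re := by
      intro j k hjk w
      have h1 : ∑ l ∈ ({j, k} : Finset (Fin n)), (ip w (Pov l *ᵥ w)).re
          ≤ ∑ l, (ip w (Pov l *ᵥ w)).re :=
        Finset.sum_le_sum_of_subset_of_nonneg (Finset.subset_univ _)
          (fun l _ _ => hQ l w)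
      rw [Finset.sum_pair hjk] at h1
      rw [← hsumQ w]
      exact h1
    set T : Fin n → Fin n → ℝ := fun j k => q k * (ip (d k) (Pov j *ᵥ d k)).re with hT
    have hpair : ∀ j k : Fin n, j < k → T j j + T k k - T k j - T j k
        ≤ Real.sqrt ((q j + q k) ^ 2 - 4 * q j * q k * ‖ip (d j) (d k)‖ ^ 2) := by
      intro j k hjk
      have h := pair_bound (Pov j) (Pov k) (hherm j) (hherm k) (hQ j) (hQ k)
        (hub j k hjk.ne) (d j) (d k) (hd j) (hd k) (q j) (q k) (hq j) (hq k)
      simp only [hT]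
      linarith [h]
    have hkey := sum_pairs_eq T
    have hsumT : ∑ j, ∑ k, T j k = 1 := by
      rw [Finset.sum_comm]
      simp only [hT]
      calc ∑ k, ∑ j, q k * (ip (d k) (Pov j *ᵥ d k)).re
          = ∑ k, q k * ∑ j, (ip (d k) (Pov j *ᵥ d k)).re :=
            Finset.sum_congr rfl fun k _ => (Finset.mul_sum _ _ _).symm
        _ = ∑ k, q k * 1 := by
            refine Finset.sum_congr rfl fun k _ => ?_
            rw [hsumQ (d k), hd k, Complex.one_re]
        _ = 1 := by simpa using hq1
    have hsum_bound : ∑ j, ∑ k, (if j < k then T j j + T k k - T k j - T j k else 0)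
        ≤ B := by
      rw [hB]
      refine Finset.sum_le_sum fun j _ => Finset.sum_le_sum fun k _ => ?_
      split_ifs with h
      · exact hpair j k h
      · exact le_refl 0
    have hdiag : ∑ j, T j j = ∑ i, q i * (ip (d i) ((Pov i) *ᵥ (d i))).re := rfl
    have hfin : (n:ℝ) * (∑ i, q i * (ip (d i) ((Pov i) *ᵥ (d i))).re) - 1 ≤ B := by
      rw [← hdiag, ← hsumT]
      calc (n:ℝ) * (∑ j, T j j) - ∑ j, ∑ k, T j k
          = ∑ j, ∑ k, (if j < k then T j j + T k k - T k j - T j k else 0) := hkey.symm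
        _ ≤ B := hsum_bound
    rw [show (1:ℝ) / n + 1 / (n:ℝ) * B = (1 + B) / n by ring]
    rw [le_div_iff₀ hn0]
    linarith [hfin]
  · have h1 : (0:ℝ) ≤ 1 / (n:ℝ) := by positivity
    have h2 : (0:ℝ) ≤ 1 / (n:ℝ) * B := by
      apply mul_nonneg h1 hB0
    linarith
end
end

section
/- Let a, b be unit vectors in ℂ^m and let q_1, q_2 ≥ 0. The Hermitian matrix T = q_1 a a^* − q_2 b b^* has trace norm (the sum of the absolute values of its eigenvalues) equal to √( (q_1 + q_2)² − 4 q_1 q_2 |⟨a, b⟩|² ). -/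
open Matrix ComplexOrder

noncomputable section

/-- The matrix `T = q₁ a a^* − q₂ b b^*` is Hermitian. -/
lemma herm {m : ℕ} (a b : Fin m → ℂ) (q1 q2 : ℝ) :
    ((q1 : ℂ) • vecMulVec a (star a) - (q2 : ℂ) • vecMulVec b (star b)).IsHermitian := by
  have h : ∀ (c : ℝ) (v : Fin m → ℂ), ((c : ℂ) • vecMulVec v (star v)).IsHermitian := by
    intro c v
    ext i j
    simp [Matrix.conjTranspose_apply, Matrix.vecMulVec_apply, mul_comm, mul_left_comm,
      mul_assoc]
  exact (h q1 a).sub (h q2 b)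

/- ### Auxiliary lemmas -/

lemma vmv_mulVec {m : ℕ} (u v x : Fin m → ℂ) :
    vecMulVec u v *ᵥ x = (v ⬝ᵥ x) • u := by
  ext i
  simp only [mulVec, vecMulVec_apply, dotProduct, Pi.smul_apply, smul_eq_mul, Finset.sum_mul]
  exact Finset.sum_congr rfl fun k _ => by ring

lemma vmv_mul {m : ℕ} (u v x y : Fin m → ℂ) :
    vecMulVec u v * vecMulVec x y = (v ⬝ᵥ x) • vecMulVec u y := by
  ext i j
  simp only [mul_apply, vecMulVec_apply, dotProduct, Matrix.smul_apply, smul_eq_mul, Finset.sum_mul]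
  exact Finset.sum_congr rfl fun k _ => by ring

lemma trace_vmv {m : ℕ} (u v : Fin m → ℂ) : (vecMulVec u v).trace = v ⬝ᵥ u := by
  simp [trace, Matrix.diag, vecMulVec_apply, dotProduct, mul_comm]

lemma conj_dot {m : ℕ} (u w : Fin m → ℂ) : star u ⬝ᵥ w = star (star w ⬝ᵥ u) := by
  simp [dotProduct, mul_comm]

lemma tr1 {m : ℕ} {A : Matrix (Fin m) (Fin m) ℂ} (hA : A.IsHermitian) :
    A.trace = ∑ j, (hA.eigenvalues j : ℂ) := by
  conv_lhs => rw [hA.spectral_theorem, Unitary.conjStarAlgAut_apply]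
  rw [trace_mul_cycle,
    (Matrix.mem_unitaryGroup_iff').mp (Matrix.IsHermitian.eigenvectorUnitary hA).2, Matrix.one_mul,
    trace_diagonal]
  rfl

lemma tr2 {m : ℕ} {A : Matrix (Fin m) (Fin m) ℂ} (hA : A.IsHermitian) :
    (A * A).trace = ∑ j, ((hA.eigenvalues j : ℂ)) ^ 2 := by
  set U : Matrix (Fin m) (Fin m) ℂ := ↑(Matrix.IsHermitian.eigenvectorUnitary hA)
  have hU : star U * U = 1 :=
    (Matrix.mem_unitaryGroup_iff').mp (Matrix.IsHermitian.eigenvectorUnitary hA).2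
  set D : Matrix (Fin m) (Fin m) ℂ := Matrix.diagonal (fun j => (hA.eigenvalues j : ℂ)) with hD
  have h1 : A = U * D * star U := hA.spectral_theorem
  have h2 : A * A = U * (D * D) * star U := by
    rw [h1]
    calc U * D * star U * (U * D * star U) = U * D * (star U * U) * D * star U := by
          simp only [Matrix.mul_assoc]
      _ = U * (D * D) * star U := by rw [hU]; simp only [Matrix.mul_one, Matrix.mul_assoc]
  rw [h2, trace_mul_cycle, ← Matrix.mul_assoc, hU, Matrix.one_mul, hD, diagonal_mul_diagonal,
    trace_diagonal]
  exact Finset.sum_congr rfl fun k _ => by simp [sq]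

/-- If the quadratic form of `T` is `q1 |⟨a,x⟩|² - q2 |⟨b,x⟩|²` with `q2 ≥ 0`, then `T`
cannot have two orthonormal eigenvectors with positive eigenvalues. -/
lemma no_two_pos {m : ℕ} (T : Matrix (Fin m) (Fin m) ℂ) (a b : Fin m → ℂ) (q1 q2 : ℝ)
    (hq2 : 0 ≤ q2)
    (hquad : ∀ x : Fin m → ℂ, star x ⬝ᵥ (T *ᵥ x) =
      q1 * (star x ⬝ᵥ a) * (star a ⬝ᵥ x) - q2 * (star x ⬝ᵥ b) * (star b ⬝ᵥ x))
    (u w : Fin m → ℂ) (s t : ℝ)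
    (hu : T *ᵥ u = (s : ℂ) • u) (hw : T *ᵥ w = (t : ℂ) • w)
    (huu : star u ⬝ᵥ u = 1) (hww : star w ⬝ᵥ w = 1)
    (huw : star u ⬝ᵥ w = 0) (hwu : star w ⬝ᵥ u = 0)
    (hs : 0 < s) (ht : 0 < t) : False := by
  set α : ℂ := star a ⬝ᵥ u with hα
  set β : ℂ := star a ⬝ᵥ w with hβ
  set x : Fin m → ℂ := β • u - α • w with hx
  have hax : star a ⬝ᵥ x = 0 := by
    simp [hx, dotProduct_sub, dotProduct_smul, ← hα, ← hβ]; ring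
  have hTx : T *ᵥ x = (β * s) • u - (α * t) • w := by
    ext k
    simp [hx, mulVec_sub, mulVec_smul, hu, hw, Pi.smul_apply, smul_eq_mul]
    ring
  have hstarx : star x = star β • star u - star α • star w := by
    ext k; simp [hx, mul_comm]
  have h3 : star x ⬝ᵥ (T *ᵥ x) = (↑(‖β‖ ^ 2 * s + ‖α‖ ^ 2 * t) : ℂ) := by
    rw [hTx, hstarx]
    simp only [sub_dotProduct, smul_dotProduct, dotProduct_sub, dotProduct_smul, huu, hww, huw,
      hwu, smul_eq_mul, mul_one, mul_zero]
    push_cast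
    rw [← Complex.mul_conj' β, ← Complex.mul_conj' α]
    simp only [starRingEnd_apply]
    ring
  set z : ℂ := star b ⬝ᵥ x with hz
  have hxb : star x ⬝ᵥ b = star z := by rw [hz, conj_dot]
  have h4 : star x ⬝ᵥ (T *ᵥ x) = (↑(-(q2 * ‖z‖ ^ 2)) : ℂ) := by
    rw [hquad x, hax, hxb, ← hz]
    push_cast
    rw [← Complex.mul_conj' z]
    simp only [starRingEnd_apply]
    ring
  have hre : ‖β‖ ^ 2 * s + ‖α‖ ^ 2 * t = -(q2 * ‖z‖ ^ 2) := by
    have := h3.symm.trans h4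
    exact_mod_cast this
  have hα0 : α = 0 := by
    have h1 : 0 ≤ ‖β‖ ^ 2 * s := by positivity
    have h2 : 0 ≤ ‖α‖ ^ 2 * t := by positivity
    have h5 : 0 ≤ q2 * ‖z‖ ^ 2 := by positivity
    have : ‖α‖ ^ 2 * t = 0 := by linarith
    have : ‖α‖ = 0 := by
      rcases mul_eq_zero.mp this with h | h
      · exact pow_eq_zero_iff (by norm_num) |>.mp h
      · exact absurd h (by positivity)
    simpa using this
  have h6 : star u ⬝ᵥ (T *ᵥ u) = (s : ℂ) := by
    rw [hu]; simp [dotProduct_smul, huu]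
  set zb : ℂ := star b ⬝ᵥ u with hzb
  have hub : star u ⬝ᵥ b = star zb := by rw [hzb, conj_dot]
  have h7 : star u ⬝ᵥ (T *ᵥ u) = (↑(-(q2 * ‖zb‖ ^ 2)) : ℂ) := by
    rw [hquad u, ← hα, hα0, hub, ← hzb]
    push_cast
    rw [← Complex.mul_conj' zb]
    simp only [starRingEnd_apply]
    ring
  have : s = -(q2 * ‖zb‖ ^ 2) := by exact_mod_cast h6.symm.trans h7
  nlinarith [sq_nonneg ‖zb‖, mul_nonneg hq2 (sq_nonneg ‖zb‖)]

lemma sq_sum_single {m : ℕ} (g : Fin m → ℝ)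
    (h : ∀ i j, g i ≠ 0 → g j ≠ 0 → i = j) :
    (∑ j, g j) ^ 2 = ∑ j, g j ^ 2 := by
  by_cases hex : ∃ i, g i ≠ 0
  · obtain ⟨i, hi⟩ := hex
    have h1 : ∑ j, g j = g i :=
      Finset.sum_eq_single i (fun b _ hb => by_contra fun hgb => hb (h b i hgb hi))
        (fun hni => absurd (Finset.mem_univ i) hni)
    have h2 : ∑ j, g j ^ 2 = g i ^ 2 :=
      Finset.sum_eq_single i
        (fun b _ hb => by
          have : g b = 0 := by_contra fun hgb => hb (h b i hgb hi)
          simp [this])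
        (fun hni => absurd (Finset.mem_univ i) hni)
    rw [h1, h2]
  · push_neg at hex
    simp [hex]

lemma key_comb {m : ℕ} (f : Fin m → ℝ)
    (hpos : ∀ i j, 0 < f i → 0 < f j → i = j)
    (hneg : ∀ i j, f i < 0 → f j < 0 → i = j) :
    (∑ j, |f j|) ^ 2 = 2 * (∑ j, f j ^ 2) - (∑ j, f j) ^ 2 := by
  set g : Fin m → ℝ := fun j => if 0 < f j then f j else 0 with hgdef
  set h : Fin m → ℝ := fun j => if f j < 0 then -f j else 0 with hhdef
  have habs : ∀ j, |f j| = g j + h j := by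
    intro j
    rcases lt_trichotomy (f j) 0 with hc | hc | hc
    · simp [hgdef, hhdef, hc, not_lt.mpr hc.le, abs_of_neg hc]
    · simp [hgdef, hhdef, hc]
    · simp [hgdef, hhdef, hc, not_lt.mpr hc.le, abs_of_pos hc]
  have hf : ∀ j, f j = g j - h j := by
    intro j
    rcases lt_trichotomy (f j) 0 with hc | hc | hc
    · simp [hgdef, hhdef, hc, not_lt.mpr hc.le]
    · simp [hgdef, hhdef, hc]
    · simp [hgdef, hhdef, hc, not_lt.mpr hc.le]
  have hsq : ∀ j, f j ^ 2 = g j ^ 2 + h j ^ 2 := by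
    intro j
    rcases lt_trichotomy (f j) 0 with hc | hc | hc
    · simp [hgdef, hhdef, hc, not_lt.mpr hc.le]
    · simp [hgdef, hhdef, hc]
    · simp [hgdef, hhdef, hc, not_lt.mpr hc.le]
  have hg : (∑ j, g j) ^ 2 = ∑ j, g j ^ 2 := by
    apply sq_sum_single
    intro i j hi hj
    apply hpos
    · by_contra hc; exact hi (by simp [hgdef, hc])
    · by_contra hc; exact hj (by simp [hgdef, hc])
  have hh : (∑ j, h j) ^ 2 = ∑ j, h j ^ 2 := by
    apply sq_sum_single
    intro i j hi hj
    apply hneg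
    · by_contra hc; exact hi (by simp [hhdef, hc])
    · by_contra hc; exact hj (by simp [hhdef, hc])
  calc (∑ j, |f j|) ^ 2 = (∑ j, (g j + h j)) ^ 2 := by
        rw [Finset.sum_congr rfl fun j _ => habs j]
    _ = ((∑ j, g j) + (∑ j, h j)) ^ 2 := by rw [Finset.sum_add_distrib]
    _ = 2 * (∑ j, f j ^ 2) - (∑ j, f j) ^ 2 := by
        have e1 : ∑ j, f j ^ 2 = (∑ j, g j ^ 2) + (∑ j, h j ^ 2) := by
          rw [Finset.sum_congr rfl fun j _ => hsq j, Finset.sum_add_distrib]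
        have e2 : ∑ j, f j = (∑ j, g j) - (∑ j, h j) := by
          rw [Finset.sum_congr rfl fun j _ => hf j, Finset.sum_sub_distrib]
        rw [e1, e2]
        linear_combination 2 * hg + 2 * hh

theorem stmt15 (m : ℕ) (a b : Fin m → ℂ)
    (ha : ip a a = 1) (hb : ip b b = 1)
    (q1 q2 : ℝ) (hq1 : 0 ≤ q1) (hq2 : 0 ≤ q2) :
    ∑ j, |(herm a b q1 q2).eigenvalues j| =
      Real.sqrt ((q1 + q2) ^ 2 - 4 * q1 * q2 * ‖ip a b‖ ^ 2) := by
  set T : Matrix (Fin m) (Fin m) ℂ :=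
    (q1 : ℂ) • vecMulVec a (star a) - (q2 : ℂ) • vecMulVec b (star b) with hTdef
  have hT : T.IsHermitian := herm a b q1 q2
  set ev : Fin m → ℝ := (herm a b q1 q2).eigenvalues with hev
  have haa : star a ⬝ᵥ a = 1 := ha
  have hbb : star b ⬝ᵥ b = 1 := hb
  set c : ℂ := star a ⬝ᵥ b with hc
  have hipc : ip a b = c := rfl
  -- quadratic form
  have hquad : ∀ x : Fin m → ℂ, star x ⬝ᵥ (T *ᵥ x) =
      q1 * (star x ⬝ᵥ a) * (star a ⬝ᵥ x) - q2 * (star x ⬝ᵥ b) * (star b ⬝ᵥ x) := by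
    intro x
    rw [hTdef, Matrix.sub_mulVec, smul_mulVec, smul_mulVec, vmv_mulVec, vmv_mulVec]
    simp only [dotProduct_sub, dotProduct_smul, smul_eq_mul]
    ring
  -- eigenvectors
  set v : Fin m → Fin m → ℂ :=
    fun j => (WithLp.equiv 2 (Fin m → ℂ)) ((herm a b q1 q2).eigenvectorBasis j) with hv
  have heig : ∀ j, T *ᵥ v j = ((ev j : ℂ)) • v j := by
    intro j
    have := (herm a b q1 q2).mulVec_eigenvectorBasis j
    rw [hv]
    refine this.trans ?_
    ext k
    simp [Complex.real_smul, hev]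
  have hortho : ∀ i j, star (v i) ⬝ᵥ (v j) = if i = j then 1 else 0 := by
    intro i j
    have := orthonormal_iff_ite.mp (herm a b q1 q2).eigenvectorBasis.orthonormal i j
    rwa [EuclideanSpace.inner_eq_star_dotProduct, dotProduct_comm] at this
  -- no two positive eigenvalues
  have hP : ∀ i j, 0 < ev i → 0 < ev j → i = j := by
    intro i j hi hj
    by_contra hne
    refine no_two_pos T a b q1 q2 hq2 hquad (v i) (v j) (ev i) (ev j)
      (heig i) (heig j) ?_ ?_ ?_ ?_ hi hj
    · rw [hortho i i]; simp
    · rw [hortho j j]; simp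
    · rw [hortho i j]; simp [hne]
    · rw [hortho j i]; simp [Ne.symm hne]
  -- no two negative eigenvalues
  have hquadN : ∀ x : Fin m → ℂ, star x ⬝ᵥ ((-T) *ᵥ x) =
      q2 * (star x ⬝ᵥ b) * (star b ⬝ᵥ x) - q1 * (star x ⬝ᵥ a) * (star a ⬝ᵥ x) := by
    intro x
    rw [Matrix.neg_mulVec, dotProduct_neg, hquad x]
    ring
  have hN : ∀ i j, ev i < 0 → ev j < 0 → i = j := by
    intro i j hi hj
    by_contra hne
    refine no_two_pos (-T) b a q2 q1 hq1 hquadN (v i) (v j) (-ev i) (-ev j)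
      ?_ ?_ ?_ ?_ ?_ ?_ (by linarith) (by linarith)
    · rw [Matrix.neg_mulVec, heig i]; push_cast; ext k; simp
    · rw [Matrix.neg_mulVec, heig j]; push_cast; ext k; simp
    · rw [hortho i i]; simp
    · rw [hortho j j]; simp
    · rw [hortho i j]; simp [hne]
    · rw [hortho j i]; simp [Ne.symm hne]
  -- trace identities
  have hS1 : ∑ j, ev j = q1 - q2 := by
    have h1 : T.trace = ((q1 - q2 : ℝ) : ℂ) := by
      rw [hTdef, trace_sub, trace_smul, trace_smul, trace_vmv, trace_vmv, haa, hbb]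
      push_cast
      simp
    have h2 : T.trace = ∑ j, (ev j : ℂ) := tr1 (herm a b q1 q2)
    have : ((∑ j, ev j : ℝ) : ℂ) = ((q1 - q2 : ℝ) : ℂ) := by
      push_cast
      rw [← h2, h1]
      push_cast
      ring
    exact_mod_cast this
  have hS2 : ∑ j, ev j ^ 2 = q1 ^ 2 + q2 ^ 2 - 2 * q1 * q2 * ‖c‖ ^ 2 := by
    have hcc : star b ⬝ᵥ a = star c := by rw [hc, conj_dot]
    have hTT : (T * T).trace = ((q1 ^ 2 + q2 ^ 2 - 2 * q1 * q2 * ‖c‖ ^ 2 : ℝ) : ℂ) := by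
      have hmc : c * star c = (‖c‖ : ℂ) ^ 2 := by
        rw [show star c = (starRingEnd ℂ) c from rfl]
        exact Complex.mul_conj' c
      simp only [hTdef, sub_mul, mul_sub, smul_mul_assoc, mul_smul_comm, vmv_mul,
        trace_sub, trace_smul, smul_smul, trace_vmv, haa, hbb, ← hc, hcc, smul_eq_mul]
      push_cast
      linear_combination (-2 * q1 * q2 : ℂ) * hmc
    have h2 : (T * T).trace = ∑ j, ((ev j : ℂ)) ^ 2 := tr2 (herm a b q1 q2)
    have : ((∑ j, ev j ^ 2 : ℝ) : ℂ) = ((q1 ^ 2 + q2 ^ 2 - 2 * q1 * q2 * ‖c‖ ^ 2 : ℝ) : ℂ) := by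
      push_cast
      rw [← h2, hTT]
      push_cast
      ring
    exact_mod_cast this
  -- conclusion
  have hkey := key_comb ev hP hN
  rw [hS1, hS2] at hkey
  have harg : (q1 + q2) ^ 2 - 4 * q1 * q2 * ‖ip a b‖ ^ 2 = (∑ j, |ev j|) ^ 2 := by
    rw [hipc, hkey]; ring
  rw [harg, Real.sqrt_sq (Finset.sum_nonneg fun j _ => abs_nonneg _)]
end
end
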